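/- Let k ≥ 4. For every v ∈ ℝ⁶ \ {0}, the symbol sequence 0 → 𝒱₀ →σ₀ 𝒱₁ →σ₁ 𝒱₂ →σ₂ 𝒱₃ → 0 is exact: σ₀ is injective, ker σ₁ = im σ₀, ker σ₂ = im σ₁, and σ₂ is surjective. Consequently the k-monogenic complex 0 → C^∞(ℝ⁶,𝒱₀) →𝒟₀ C^∞(ℝ⁶,𝒱₁) →𝒟₁ C^∞(ℝ⁶,𝒱₂) →𝒟₂ C^∞(ℝ⁶,𝒱₃) → 0 is an elliptic complex. -/

import Mathlib

open scoped BigOperators ComplexConjugate ENNReal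
open MeasureTheory

set_option maxHeartbeats 1000000

noncomputable section

/-- The index set `{1,2,3,4}` of spinor indices. -/
abbrev Idx := Fin 4

/-- Tensors with `q` (antisymmetric) superscripts and `p` (symmetric) subscripts,
each index ranging over `{1,2,3,4}`. -/
abbrev Tens (q p : ℕ) := (Fin q → Idx) → (Fin p → Idx) → ℂ

/-- Symmetry in the subscripts. -/
def SymSub {q p : ℕ} (f : Tens q p) : Prop :=
  ∀ (A : Fin q → Idx) (σ : Equiv.Perm (Fin p)) (B : Fin p → Idx), f A (B ∘ σ) = f A B

/-- Antisymmetry in the superscripts. -/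
def AntiSup {q p : ℕ} (f : Tens q p) : Prop :=
  ∀ (σ : Equiv.Perm (Fin q)) (A : Fin q → Idx) (B : Fin p → Idx),
    f (A ∘ σ) B = ((Equiv.Perm.sign σ : ℤ) : ℂ) * f A B

/-- Membership in `V_l = ⊙^p ℂ⁴ ⊗ ∧^q ℂ⁴`: symmetric in subscripts, antisymmetric in
superscripts. -/
def IsMixed {q p : ℕ} (f : Tens q p) : Prop := AntiSup f ∧ SymSub f

/-- Symmetrization `ξ_{(B₁…B_t)}` of a `t`-index tensor. -/
def symmetrize {t : ℕ} (ξ : (Fin t → Idx) → ℂ) : (Fin t → Idx) → ℂ :=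
  fun B => ((t.factorial : ℂ))⁻¹ * ∑ σ : Equiv.Perm (Fin t), ξ (B ∘ σ)

/-- Antisymmetrization `ξ_{[B₁…B_t]}` of a `t`-index tensor. -/
def antisymmetrize {t : ℕ} (ξ : (Fin t → Idx) → ℂ) : (Fin t → Idx) → ℂ :=
  fun B => ((t.factorial : ℂ))⁻¹ * ∑ σ : Equiv.Perm (Fin t),
    ((Equiv.Perm.sign σ : ℤ) : ℂ) * ξ (B ∘ σ)

/-- The contraction `𝒞(f)^{A₁…A_{q}}_{B₁…B_{p}} = Σ_C f^{C A₁…A_q}_{B₁…B_p C}`. -/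
def contr {q p : ℕ} (f : Tens (q+1) (p+1)) : Tens q p :=
  fun A B => ∑ C : Idx, f (Fin.cons C A) (Fin.snoc B C)

/-- The Hermitian inner product on tensors, induced from `⊗^k ℂ⁴`. -/
def tinner {q p : ℕ} (f h : Tens q p) : ℂ :=
  ∑ A : Fin q → Idx, ∑ B : Fin p → Idx, f A B * conj (h A B)

/-- The squared norm of a tensor. -/
def tnormSq {q p : ℕ} (f : Tens q p) : ℝ :=
  ∑ A : Fin q → Idx, ∑ B : Fin p → Idx, Complex.normSq (f A B)
/-- Points of `ℝ⁶`, with coordinates `x 0, …, x 5`. -/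
abbrev Pt := Fin 6 → ℝ

/-- Coefficients (in front of `∂_{x_j}`) of the operators `∇^{AB}`:
`∇^{12}=i∂₀+∂₅`, `∇^{13}=∂₃+i∂₄`, `∇^{14}=∂₁+i∂₂`, `∇^{23}=∂₁−i∂₂`,
`∇^{24}=−∂₃+i∂₄`, `∇^{34}=−i∂₀+∂₅`, antisymmetric. -/
def nablaCoeff : Fin 4 → Fin 4 → Fin 6 → ℂ :=
  ![![(0 : Fin 6 → ℂ), ![Complex.I,0,0,0,0,1], ![0,0,0,1,Complex.I,0], ![0,1,Complex.I,0,0,0]],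
    ![-![Complex.I,0,0,0,0,1], (0 : Fin 6 → ℂ), ![0,1,-Complex.I,0,0,0], ![0,0,0,-1,Complex.I,0]],
    ![-![0,0,0,1,Complex.I,0], -![0,1,-Complex.I,0,0,0], (0 : Fin 6 → ℂ), ![-Complex.I,0,0,0,0,1]],
    ![-![0,1,Complex.I,0,0,0], -![0,0,0,-1,Complex.I,0], -![-Complex.I,0,0,0,0,1], (0 : Fin 6 → ℂ)]]

/-- Membership in `𝒱₀` (no contraction condition). -/
def InV0 {p : ℕ} (t : Tens 0 p) : Prop := IsMixed t

/-- Membership in `𝒱_l`, `l ≥ 1`: mixed symmetry and vanishing contraction. -/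
def InV {q p : ℕ} (t : Tens (q+1) (p+1)) : Prop :=
  IsMixed t ∧ ∀ A B, contr t A B = 0

/-- The antisymmetric matrix `M = M(v)`, the symbol of `(∇^{AB})` at `v` (each `∂_{x_j}`
replaced by `v_j / i`). -/
def symbM (v : Pt) (A B : Fin 4) : ℂ :=
  Complex.I⁻¹ * ∑ j : Fin 6, nablaCoeff A B j * ((v j : ℝ) : ℂ)

/-- The principal symbol `σ_l` of `𝒟_l` at `v`:
`(σ_l ξ)^{A₁…A_{l+1}}_{B₂…} = Σ_{B₁} M^{B₁[A₁} ξ^{A₂…A_{l+1}]}_{B₁…}`. -/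
def symb {q p : ℕ} (v : Pt) (ξ : Tens q (p+1)) : Tens (q+1) p :=
  fun A B => antisymmetrize
    (fun A' => ∑ B₁ : Idx, symbM v B₁ (A' 0) * ξ (Fin.tail A') (Fin.cons B₁ B)) A

/-! ### Basic index-shuffling lemmas -/

section IndexLemmas

variable {n : ℕ} {α : Type*}

lemma cons_comp_succAbove_zero (x : α) (T : Fin n → α) :
    (Fin.cons x T : Fin (n+1) → α) ∘ (0 : Fin (n+1)).succAbove = T := by
  funext t
  simp [Fin.succAbove_zero]

lemma cons_comp_succAbove_succ (x : α) (T : Fin (n+1) → α) (j : Fin (n+1)) :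
    (Fin.cons x T : Fin (n+2) → α) ∘ (Fin.succ j).succAbove = Fin.cons x (T ∘ j.succAbove) := by
  funext t
  refine Fin.cases ?_ (fun s => ?_) t
  · simp [Fin.succ_succAbove_zero]
  · simp [Fin.succ_succAbove_succ]

lemma cons_self_comp (B : Fin (n+1) → α) (i : Fin (n+1)) :
    (Fin.cons (B i) (B ∘ i.succAbove) : Fin (n+1) → α) = B ∘ (i.cycleRange.symm) := by
  funext t
  refine Fin.cases ?_ (fun s => ?_) t
  · simp [Fin.cycleRange_symm_zero]
  · simp [Fin.cycleRange_symm_succ]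

lemma snoc_comp_succAbove_last (B : Fin n → α) (C : α) :
    (Fin.snoc B C : Fin (n+1) → α) ∘ (Fin.last n).succAbove = B := by
  funext t
  simp [Fin.succAbove_last]

lemma snoc_comp_succAbove_castSucc (B : Fin (n+1) → α) (C : α) (i : Fin (n+1)) :
    (Fin.snoc B C : Fin (n+2) → α) ∘ (i.castSucc).succAbove
      = Fin.snoc (B ∘ i.succAbove) C := by
  funext t
  refine Fin.lastCases ?_ (fun s => ?_) t
  · rw [Function.comp_apply,
      Fin.succAbove_of_le_castSucc _ _ (by exact Fin.castSucc_le_castSucc_iff.mpr (Fin.le_last i)),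
      Fin.succ_last]
    simp
  · rw [Function.comp_apply, Fin.castSucc_succAbove_castSucc]
    simp

lemma cons_snoc_comm (D C : α) (B : Fin n → α) :
    (Fin.cons D (Fin.snoc B C) : Fin (n+2) → α) = Fin.snoc (Fin.cons D B) C := by
  funext t
  refine Fin.cases ?_ (fun s => ?_) t
  · rw [Fin.cons_zero, ← Fin.castSucc_zero, Fin.snoc_castSucc, Fin.cons_zero]
  · rw [Fin.cons_succ]
    refine Fin.lastCases ?_ (fun s' => ?_) s
    · rw [Fin.snoc_last, Fin.succ_last, Fin.snoc_last]
    · rw [Fin.snoc_castSucc, Fin.succ_castSucc, Fin.snoc_castSucc, Fin.cons_succ]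

lemma snoc_eq_cons_comp (B : Fin n → α) (C : α) :
    (Fin.snoc B C : Fin (n+1) → α) = (Fin.cons C B) ∘ (finRotate (n+1)) := by
  funext t
  refine Fin.lastCases ?_ (fun s => ?_) t
  · simp [finRotate_last]
  · rw [Fin.snoc_castSucc, Function.comp_apply, finRotate_succ_apply,
      show ((Fin.castSucc s) + 1) = s.succ from by rw [← Fin.coeSucc_eq_succ],
      Fin.cons_succ]

lemma cons_comp_extend (x : α) (T : Fin n → α) (π : Equiv.Perm (Fin n)) :
    Fin.cons x (T ∘ π) = (Fin.cons x T : Fin (n+1) → α) ∘ (Equiv.Perm.decomposeFin.symm (0, π)) := by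
  funext t
  refine Fin.cases ?_ (fun s => ?_) t
  · simp [Equiv.Perm.decomposeFin_symm_apply_zero]
  · simp [Equiv.Perm.decomposeFin_symm_apply_succ]

lemma cons_cons_swap (x y : α) (B : Fin n → α) :
    (Fin.cons x (Fin.cons y B) : Fin (n+2) → α)
      = (Fin.cons y (Fin.cons x B)) ∘ (Equiv.swap 0 1) := by
  funext t
  refine Fin.cases ?_ (fun s => ?_) t
  · simp
  · refine Fin.cases ?_ (fun s' => ?_) s
    · simp [Equiv.swap_apply_right]
    · rw [Function.comp_apply, Equiv.swap_apply_of_ne_of_ne (by simp [Fin.succ_ne_zero])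
        (by
          rw [← Fin.succ_zero_eq_one]
          intro h
          exact (Fin.succ_ne_zero s') (Fin.succ_injective _ h))]
      simp

lemma cons_swap_zero_last (D C : α) (B : Fin n → α) :
    (Fin.cons C (Fin.snoc B D) : Fin (n+2) → α) ∘ (Equiv.swap 0 (Fin.last (n+1)))
      = Fin.cons D (Fin.snoc B C) := by
  funext t
  refine Fin.cases ?_ (fun s => ?_) t
  · rw [Function.comp_apply, Equiv.swap_apply_left, Fin.cons_zero,
      show (Fin.last (n+1)) = Fin.succ (Fin.last n) from (Fin.succ_last n).symm,
      Fin.cons_succ, Fin.snoc_last]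
  · refine Fin.lastCases ?_ (fun s' => ?_) s
    · rw [Function.comp_apply, Fin.succ_last, Equiv.swap_apply_right, Fin.cons_zero,
        ← Fin.succ_last, Fin.cons_succ, Fin.snoc_last]
    · rw [Function.comp_apply,
        Equiv.swap_apply_of_ne_of_ne (Fin.succ_ne_zero _)
          (by rw [Fin.succ_castSucc]; exact (Fin.castSucc_lt_last _).ne),
        Fin.cons_succ, Fin.cons_succ, Fin.snoc_castSucc, Fin.snoc_castSucc]

lemma exists_removal {p : ℕ} (π : Equiv.Perm (Fin (p+1))) (i : Fin (p+1)) :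
    ∃ τ : Equiv.Perm (Fin p), ∀ j, π (i.succAbove j) = (π i).succAbove (τ j) := by
  classical
  set e : Option (Fin p) ≃ Option (Fin p) :=
    ((finSuccEquiv' i).symm.trans (π.trans (finSuccEquiv' (π i)))) with he
  refine ⟨e.removeNone, fun j => ?_⟩
  have h1 : e (some j) = finSuccEquiv' (π i) (π (i.succAbove j)) := by
    simp [he, finSuccEquiv'_succAbove]
  have hne : π (i.succAbove j) ≠ π i := fun h => (Fin.succAbove_ne i j) (π.injective h)
  obtain ⟨j', hj'⟩ := Fin.exists_succAbove_eq hne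
  have h2 : e (some j) = some j' := by rw [h1, ← hj', finSuccEquiv'_succAbove]
  have h3 : some (e.removeNone j) = e (some j) := Equiv.removeNone_some e (⟨j', h2⟩ : ∃ x', e (some j) = some x')
  rw [h2] at h3
  have : e.removeNone j = j' := Option.some_injective _ h3
  rw [this, hj']

end IndexLemmas
/-! ### The symbol matrix: antisymmetry and Clifford identity -/

/-- `|v|²` as a complex number. -/
def rsq (v : Pt) : ℂ := ((∑ j : Fin 6, (v j)^2 : ℝ) : ℂ)

lemma rsq_ne_zero {v : Pt} (hv : v ≠ 0) : rsq v ≠ 0 := by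
  have h1 : (0:ℝ) < ∑ j : Fin 6, (v j)^2 := by
    obtain ⟨j, hj⟩ := Function.ne_iff.mp hv
    exact Finset.sum_pos' (fun i _ => sq_nonneg _)
      ⟨j, Finset.mem_univ j, lt_of_le_of_ne (sq_nonneg _) (Ne.symm (pow_ne_zero 2 hj))⟩
  simp only [rsq, ne_eq, Complex.ofReal_eq_zero]
  exact fun h => ne_of_gt h1 h

lemma symbM_antisymm (v : Pt) (a b : Idx) : symbM v a b = -symbM v b a := by
  have h : nablaCoeff a b = - nablaCoeff b a := by
    fin_cases a <;> fin_cases b <;> simp [nablaCoeff]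
  simp only [symbM, h, Pi.neg_apply, neg_mul, Finset.sum_neg_distrib, mul_neg]

lemma cliff {v : Pt} (a b : Idx) :
    ∑ C : Idx, symbM v a C * (starRingEnd ℂ) (symbM v b C)
      = if a = b then rsq v else 0 := by
  have hs : ∀ x y : Idx, symbM v x y
      = -Complex.I * ∑ j : Fin 6, nablaCoeff x y j * ((v j : ℝ) : ℂ) := by
    intro x y; rw [symbM, Complex.inv_I]
  have hc : ∀ x y : Idx, (starRingEnd ℂ) (symbM v x y)
      = Complex.I * ∑ j : Fin 6, (starRingEnd ℂ) (nablaCoeff x y j) * ((v j : ℝ) : ℂ) := by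
    intro x y
    rw [hs, map_mul, map_neg, Complex.conj_I, map_sum, neg_neg]
    congr 1
    refine Finset.sum_congr rfl (fun j _ => ?_)
    rw [map_mul, Complex.conj_ofReal]
  have hprod : ∀ x y : Idx, symbM v a x * (starRingEnd ℂ) (symbM v b y)
      = (∑ j : Fin 6, nablaCoeff a x j * ((v j : ℝ) : ℂ))
        * ∑ j : Fin 6, (starRingEnd ℂ) (nablaCoeff b y j) * ((v j : ℝ) : ℂ) := by
    intro x y
    rw [hs, hc]
    have : -Complex.I * Complex.I = 1 := by
      rw [neg_mul, Complex.I_mul_I, neg_neg]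
    calc -Complex.I * (∑ j : Fin 6, nablaCoeff a x j * ((v j : ℝ) : ℂ))
          * (Complex.I * ∑ j : Fin 6, (starRingEnd ℂ) (nablaCoeff b y j) * ((v j : ℝ) : ℂ))
        = (-Complex.I * Complex.I) * ((∑ j : Fin 6, nablaCoeff a x j * ((v j : ℝ) : ℂ))
          * ∑ j : Fin 6, (starRingEnd ℂ) (nablaCoeff b y j) * ((v j : ℝ) : ℂ)) := by ring
      _ = _ := by rw [this, one_mul]
  have hr : rsq v = ∑ j : Fin 6, ((v j : ℝ) : ℂ)^2 := by
    rw [rsq]; push_cast; rfl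
  simp only [Fin.sum_univ_four, hprod, hr]
  fin_cases a <;> fin_cases b <;>
    · simp only [nablaCoeff, Fin.sum_univ_succ, Finset.univ_eq_empty, Finset.sum_empty,
        Matrix.cons_val_zero, Matrix.cons_val_succ, Pi.neg_apply, Pi.zero_apply,
        map_neg, map_zero, map_one, Complex.conj_I, Fin.sum_univ_zero]
      norm_num [Complex.I_sq, Fin.ext_iff]
      try simp only [Matrix.cons_val, Matrix.vecHead, Matrix.vecTail, Function.comp_apply, Fin.succ_zero_eq_one, Fin.succ_one_eq_two, map_neg, map_zero, map_one, Complex.conj_I, mul_zero, zero_mul, add_zero, zero_add, mul_one, one_mul]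
      try ring_nf
      try simp only [Complex.I_sq]
      try ring_nf
/-! ### The operators `Dop` (unnormalized symbol) and `Hop` (homotopy) -/

/-- Unnormalized symbol operator (slot form). -/
def Dop (v : Pt) {q p : ℕ} (ξ : Tens q (p+1)) : Tens (q+1) p :=
  fun A B => ∑ j : Fin (q+1), (-1 : ℂ) ^ (j : ℕ) *
    ∑ D : Idx, symbM v D (A j) * ξ (A ∘ j.succAbove) (Fin.cons D B)

/-- `-(rsq v)⁻¹` times the conjugate symbol matrix; a two-sided "inverse" of `M`. -/
def Wmat (v : Pt) (b e : Idx) : ℂ := -(rsq v)⁻¹ * (starRingEnd ℂ) (symbM v b e)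

/-- Homotopy operator. -/
def Hop (v : Pt) {q p : ℕ} (η : Tens (q+1) p) : Tens q (p+1) :=
  fun A B => ∑ i : Fin (p+1), ∑ E : Idx, Wmat v (B i) E * η (Fin.cons E A) (B ∘ i.succAbove)

lemma WM1 {v : Pt} (hv : v ≠ 0) (b D : Idx) :
    ∑ E : Idx, Wmat v b E * symbM v D E = -(if D = b then 1 else 0) := by
  have h : ∑ E : Idx, Wmat v b E * symbM v D E
      = -(rsq v)⁻¹ * ∑ E : Idx, symbM v D E * (starRingEnd ℂ) (symbM v b E) := by
    rw [Finset.mul_sum]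
    exact Finset.sum_congr rfl (fun E _ => by rw [Wmat]; ring)
  rw [h, cliff]
  by_cases hDb : D = b <;> simp [hDb, rsq_ne_zero hv]

lemma WM2 {v : Pt} (hv : v ≠ 0) (E a : Idx) :
    ∑ D : Idx, Wmat v D E * symbM v D a = -(if E = a then 1 else 0) := by
  have h : ∑ D : Idx, Wmat v D E * symbM v D a
      = -(rsq v)⁻¹ * (starRingEnd ℂ) (∑ D : Idx, symbM v E D * (starRingEnd ℂ) (symbM v a D)) := by
    rw [map_sum, Finset.mul_sum]
    refine Finset.sum_congr rfl (fun D _ => ?_)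
    rw [Wmat, map_mul, Complex.conj_conj, symbM_antisymm v E D, symbM_antisymm v a D,
      map_neg]
    ring
  rw [h, cliff]
  have hrc : (starRingEnd ℂ) (rsq v) = rsq v := by
    rw [rsq, Complex.conj_ofReal]
  by_cases hEa : E = a <;> simp [hEa, hrc, rsq_ne_zero hv]

/-! ### Generic (anti)symmetry helpers -/

lemma antiSup_zero {p : ℕ} (f : Tens 0 p) : AntiSup f := by
  intro σ A B
  have h1 : σ = 1 := by
    ext x; exact x.elim0
  subst h1
  have h2 : A ∘ (⇑(1 : Equiv.Perm (Fin 0))) = A := by funext x; exact x.elim0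
  rw [h2]; simp

lemma antiSup_one {p : ℕ} (f : Tens 1 p) : AntiSup f := by
  intro σ A B
  have h1 : σ = 1 := by
    ext x
    fin_omega
  rw [h1]; simp

/-- antisymmetric tensors vanish when two superscripts agree -/
lemma antiSup_repeat {q p : ℕ} {f : Tens q p} (hf : AntiSup f) {A : Fin q → Idx}
    {i j : Fin q} (hij : i ≠ j) (hA : A i = A j) (B : Fin p → Idx) : f A B = 0 := by
  have h1 : A ∘ (Equiv.swap i j) = A := by
    funext t
    rcases eq_or_ne t i with rfl | hti
    · simp [Equiv.swap_apply_left, hA]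
    rcases eq_or_ne t j with rfl | htj
    · simp [Equiv.swap_apply_right, hA]
    · simp [Equiv.swap_apply_of_ne_of_ne hti htj]
  have h2 := hf (Equiv.swap i j) A B
  rw [h1, Equiv.Perm.sign_swap hij] at h2
  have : (2 : ℂ) * f A B = 0 := by
    rw [two_mul]
    nth_rewrite 1 [h2]
    push_cast
    ring
  exact (mul_eq_zero.mp this).resolve_left (by norm_num)

/-- images of `antisymmetrize` are antisymmetric. -/
lemma antisymmetrize_antiSup {t : ℕ} (g : (Fin t → Idx) → ℂ) (π : Equiv.Perm (Fin t))
    (A : Fin t → Idx) :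
    antisymmetrize g (A ∘ π) = ((Equiv.Perm.sign π : ℤ) : ℂ) * antisymmetrize g A := by
  rw [antisymmetrize, antisymmetrize]
  have main : ∑ σ : Equiv.Perm (Fin t), ((Equiv.Perm.sign σ : ℤ) : ℂ) * g ((A ∘ π) ∘ σ)
      = ((Equiv.Perm.sign π : ℤ) : ℂ)
        * ∑ σ : Equiv.Perm (Fin t), ((Equiv.Perm.sign σ : ℤ) : ℂ) * g (A ∘ σ) := by
    rw [Finset.mul_sum]
    rw [← Equiv.sum_comp (Equiv.mulLeft π)
      (fun ρ => ((Equiv.Perm.sign π : ℤ) : ℂ) * (((Equiv.Perm.sign ρ : ℤ) : ℂ) * g (A ∘ ρ)))]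
    refine Finset.sum_congr rfl (fun σ _ => ?_)
    have h1 : (A ∘ π) ∘ σ = A ∘ (Equiv.mulLeft π σ) := by
      funext x; simp [Equiv.Perm.mul_apply]
    have h2 : Equiv.Perm.sign (Equiv.mulLeft π σ : Equiv.Perm (Fin t))
        = Equiv.Perm.sign π * Equiv.Perm.sign σ := by
      simp [map_mul]
    rw [h1, h2]
    rcases Int.units_eq_one_or (Equiv.Perm.sign π) with h | h <;> simp [h] <;> try ring
  rw [main]
  ring

lemma symb_antiSup {q p : ℕ} (v : Pt) (ξ : Tens q (p+1)) : AntiSup (symb v ξ) := by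
  intro σ A B
  rw [symb]
  exact antisymmetrize_antiSup _ σ A

/-! ### The slot formula: `symb = (q+1)⁻¹ • Dop` on antisymmetric tensors -/

lemma symb_eq_Dop {q p : ℕ} (v : Pt) (ξ : Tens q (p+1)) (hA : AntiSup ξ)
    (A : Fin (q+1) → Idx) (B : Fin p → Idx) :
    symb v ξ A B = ((q+1 : ℕ) : ℂ)⁻¹ * Dop v ξ A B := by
  rw [symb, antisymmetrize, Dop]
  set g : (Fin (q+1) → Idx) → ℂ :=
    fun A' => ∑ D : Idx, symbM v D (A' 0) * ξ (Fin.tail A') (Fin.cons D B) with hg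
  rw [← Equiv.sum_comp (Equiv.Perm.decomposeFin.symm :
      (Fin (q+1) × Equiv.Perm (Fin q)) ≃ Equiv.Perm (Fin (q+1)))
    (fun σ => ((Equiv.Perm.sign σ : ℤ) : ℂ) * g (A ∘ σ)), Fintype.sum_prod_type]
  have key : ∀ (i : Fin (q+1)) (τ : Equiv.Perm (Fin q)),
      ((Equiv.Perm.sign (Equiv.Perm.decomposeFin.symm (i, τ)) : ℤ) : ℂ)
        * g (A ∘ Equiv.Perm.decomposeFin.symm (i, τ))
      = (if i = 0 then 1 else -1) *
          ∑ D : Idx, symbM v D (A i) * ξ ((fun s => A (Equiv.swap 0 i s.succ))) (Fin.cons D B) := by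
    intro i τ
    have h0 : (A ∘ Equiv.Perm.decomposeFin.symm (i, τ)) 0 = A i := by
      simp [Equiv.Perm.decomposeFin_symm_apply_zero]
    have htail : Fin.tail (A ∘ Equiv.Perm.decomposeFin.symm (i, τ))
        = (fun s => A (Equiv.swap 0 i s.succ)) ∘ τ := by
      funext s
      simp [Fin.tail, Equiv.Perm.decomposeFin_symm_apply_succ]
    have hsign : ((Equiv.Perm.sign (Equiv.Perm.decomposeFin.symm (i, τ)) : ℤ) : ℂ)
        = (if i = 0 then 1 else -1) * ((Equiv.Perm.sign τ : ℤ) : ℂ) := by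
      rw [Equiv.Perm.decomposeFin.symm_sign]
      by_cases hi : i = 0 <;> simp [hi]
    have hτsq : ((Equiv.Perm.sign τ : ℤ) : ℂ) * ((Equiv.Perm.sign τ : ℤ) : ℂ) = 1 := by
      rcases Int.units_eq_one_or (Equiv.Perm.sign τ) with h | h <;> simp [h]
    rw [hg]
    simp only [h0, htail]
    rw [hsign, Finset.mul_sum, Finset.mul_sum]
    refine Finset.sum_congr rfl (fun D _ => ?_)
    rw [hA τ (fun s => A (Equiv.swap 0 i s.succ)) (Fin.cons D B)]
    calc (if i = 0 then (1:ℂ) else -1) * ((Equiv.Perm.sign τ : ℤ) : ℂ)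
          * (symbM v D (A i) * (((Equiv.Perm.sign τ : ℤ) : ℂ)
            * ξ (fun s => A (Equiv.swap 0 i s.succ)) (Fin.cons D B)))
        = (if i = 0 then (1:ℂ) else -1)
            * (((Equiv.Perm.sign τ : ℤ) : ℂ) * ((Equiv.Perm.sign τ : ℤ) : ℂ))
            * (symbM v D (A i) * ξ (fun s => A (Equiv.swap 0 i s.succ)) (Fin.cons D B)) := by
          ring
      _ = _ := by rw [hτsq, mul_one]
  have key2 : ∀ i : Fin (q+1),
      (if i = 0 then (1:ℂ) else -1) *
          ∑ D : Idx, symbM v D (A i) * ξ ((fun s => A (Equiv.swap 0 i s.succ))) (Fin.cons D B)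
      = (-1 : ℂ) ^ (i : ℕ) * ∑ D : Idx, symbM v D (A i) * ξ (A ∘ i.succAbove) (Fin.cons D B) := by
    intro i
    refine Fin.cases ?_ (fun i' => ?_) i
    · have : (fun s : Fin q => A (Equiv.swap 0 (0 : Fin (q+1)) s.succ)) = A ∘ (0 : Fin (q+1)).succAbove := by
        funext s; simp [Fin.succAbove_zero]
      rw [this]; simp
    · have h1 : (fun s : Fin q => A (Equiv.swap 0 i'.succ s.succ))
          = (A ∘ (i'.succ).succAbove) ∘ (i'.cycleRange) := by
        funext s
        simp [Fin.succAbove_cycleRange]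
      have h2 : ∀ D, ξ (fun s : Fin q => A (Equiv.swap 0 i'.succ s.succ)) (Fin.cons D B)
          = (-1 : ℂ) ^ (i' : ℕ) * ξ (A ∘ (i'.succ).succAbove) (Fin.cons D B) := by
        intro D
        rw [h1, hA (i'.cycleRange) (A ∘ (i'.succ).succAbove) (Fin.cons D B),
          Fin.sign_cycleRange]
        push_cast
        ring_nf
      simp only [h2]
      rw [if_neg (Fin.succ_ne_zero i')]
      rw [Finset.mul_sum, Finset.mul_sum]
      refine Finset.sum_congr rfl (fun D _ => ?_)
      rw [Fin.val_succ, pow_succ]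
      ring
  simp only [key, key2, Finset.sum_const, Finset.card_univ, Fintype.card_perm,
    Fintype.card_fin, nsmul_eq_mul]
  rw [Finset.mul_sum, Finset.mul_sum]
  refine Finset.sum_congr rfl (fun j _ => ?_)
  have hqf : ((q.factorial : ℕ) : ℂ) ≠ 0 := Nat.cast_ne_zero.mpr (Nat.factorial_ne_zero q)
  have hfac : (((q+1).factorial : ℕ) : ℂ) = ((q+1 : ℕ) : ℂ) * ((q.factorial : ℕ) : ℂ) := by
    rw [Nat.factorial_succ]; push_cast; ring
  rw [hfac, mul_inv, mul_assoc, inv_mul_cancel_left₀ hqf]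
/-! ### Preservation lemmas -/

lemma sum_pair_antisym {f : Idx → Idx → ℂ} (h : ∀ x y, f x y = -f y x) :
    ∑ x : Idx, ∑ y : Idx, f x y = 0 := by
  have h1 : ∑ x : Idx, ∑ y : Idx, f x y = -∑ x : Idx, ∑ y : Idx, f x y := by
    calc ∑ x : Idx, ∑ y : Idx, f x y = ∑ x : Idx, ∑ y : Idx, -(f y x) :=
        Finset.sum_congr rfl (fun x _ => Finset.sum_congr rfl (fun y _ => h x y))
      _ = -∑ x : Idx, ∑ y : Idx, f y x := by
        simp [Finset.sum_neg_distrib]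
      _ = -∑ x : Idx, ∑ y : Idx, f x y := by rw [Finset.sum_comm]
  have h2 : (2:ℂ) * (∑ x : Idx, ∑ y : Idx, f x y) = 0 := by linear_combination h1
  exact (mul_eq_zero.mp h2).resolve_left (by norm_num)

lemma slot_sum_symm {p : ℕ} (F : Idx → (Fin p → Idx) → ℂ)
    (hF : ∀ (x : Idx) (e : Equiv.Perm (Fin p)) (T : Fin p → Idx), F x (T ∘ e) = F x T)
    (π : Equiv.Perm (Fin (p+1))) (B : Fin (p+1) → Idx) :
    ∑ i : Fin (p+1), F ((B ∘ π) i) ((B ∘ π) ∘ i.succAbove)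
      = ∑ i : Fin (p+1), F (B i) (B ∘ i.succAbove) := by
  have key : ∀ i : Fin (p+1), F (B (π i)) ((B ∘ π) ∘ i.succAbove)
      = F (B (π i)) (B ∘ (π i).succAbove) := by
    intro i
    obtain ⟨τ, hτ⟩ := exists_removal π i
    have he : ((B ∘ π) ∘ i.succAbove) = (B ∘ (π i).succAbove) ∘ τ := by
      funext j
      simp only [Function.comp_apply]
      rw [hτ j]
    rw [he, hF]
  calc ∑ i : Fin (p+1), F ((B ∘ π) i) ((B ∘ π) ∘ i.succAbove)
      = ∑ i : Fin (p+1), F (B (π i)) (B ∘ (π i).succAbove) :=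
        Finset.sum_congr rfl (fun i _ => key i)
    _ = ∑ i : Fin (p+1), F (B i) (B ∘ i.succAbove) :=
        Equiv.sum_comp π (fun i => F (B i) (B ∘ i.succAbove))

/-- `Hop` preserves subscript symmetry. -/
lemma Hop_symSub {q p : ℕ} (v : Pt) (ξ : Tens (q+1) p) (hs : SymSub ξ) :
    SymSub (Hop v ξ) := by
  intro A π B
  rw [Hop, Hop]
  exact slot_sum_symm (fun x T => ∑ E : Idx, Wmat v x E * ξ (Fin.cons E A) T)
    (fun x e T => Finset.sum_congr rfl (fun E _ => by rw [hs (Fin.cons E A) e T])) π B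

/-- `Hop` preserves superscript antisymmetry. -/
lemma Hop_antiSup {q p : ℕ} (v : Pt) (ξ : Tens (q+1) p) (ha : AntiSup ξ) :
    AntiSup (Hop v ξ) := by
  intro π A B
  rw [Hop, Hop, Finset.mul_sum]
  refine Finset.sum_congr rfl (fun i _ => ?_)
  rw [Finset.mul_sum]
  refine Finset.sum_congr rfl (fun E _ => ?_)
  rw [cons_comp_extend E A π, ha (Equiv.Perm.decomposeFin.symm (0, π)) (Fin.cons E A),
    Equiv.Perm.decomposeFin.symm_sign]
  simp only [if_true, one_mul, if_pos]
  ring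

/-- Rotated form of the contraction, for subscript-symmetric tensors. -/
lemma contr_rot {q p : ℕ} (ξ : Tens (q+1) (p+1)) (hs : SymSub ξ) (A : Fin q → Idx)
    (B : Fin p → Idx) :
    contr ξ A B = ∑ C : Idx, ξ (Fin.cons C A) (Fin.cons C B) := by
  simp only [contr]
  refine Finset.sum_congr rfl (fun C _ => ?_)
  rw [snoc_eq_cons_comp B C, hs (Fin.cons C A) (finRotate (p+1)) (Fin.cons C B)]

/-- `contr` preserves subscript symmetry. -/
lemma contr_symSub {q p : ℕ} (ξ : Tens (q+1) (p+1)) (hs : SymSub ξ) :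
    SymSub (contr ξ) := by
  intro A π B
  rw [contr_rot ξ hs, contr_rot ξ hs]
  refine Finset.sum_congr rfl (fun C _ => ?_)
  rw [cons_comp_extend C B π, hs (Fin.cons C A) (Equiv.Perm.decomposeFin.symm (0, π))]

lemma snoc_snoc_swap {n : ℕ} {α : Type*} (B : Fin n → α) (x y : α) :
    (Fin.snoc (Fin.snoc B x) y : Fin (n+2) → α)
      = (Fin.snoc (Fin.snoc B y) x) ∘ (Equiv.swap (Fin.last (n+1)) ((Fin.last n).castSucc)) := by
  funext t
  refine Fin.lastCases ?_ (fun s => ?_) t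
  · rw [Function.comp_apply, Equiv.swap_apply_left, Fin.snoc_castSucc, Fin.snoc_last,
      Fin.snoc_last]
  · refine Fin.lastCases ?_ (fun s' => ?_) s
    · rw [Function.comp_apply, Equiv.swap_apply_right, Fin.snoc_last, Fin.snoc_castSucc,
        Fin.snoc_last]
    · rw [Function.comp_apply,
        Equiv.swap_apply_of_ne_of_ne (Fin.castSucc_lt_last _).ne
          (by
            intro hcontra
            exact (Fin.castSucc_lt_last s').ne (Fin.castSucc_injective _ hcontra)),
        Fin.snoc_castSucc, Fin.snoc_castSucc, Fin.snoc_castSucc, Fin.snoc_castSucc]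

/-- the double contraction of a mixed `(2, p+2)`-tensor vanishes. -/
lemma contr_contr {p : ℕ} (η : Tens 2 (p+2)) (ha : AntiSup η) (hs : SymSub η)
    (A : Fin 0 → Idx) (B : Fin p → Idx) :
    contr (contr η) A B = 0 := by
  simp only [contr]
  have swap01sign : ((Equiv.Perm.sign (Equiv.swap (0 : Fin 2) 1) : ℤ) : ℂ) = -1 := by
    rw [Equiv.Perm.sign_swap (by decide)]
    simp
  apply sum_pair_antisym
    (f := fun x y => η (Fin.cons y (Fin.cons x A)) (Fin.snoc (Fin.snoc B x) y))
  intro x y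
  have h1 : (Fin.cons y (Fin.cons x A)) = (Fin.cons x (Fin.cons y A)) ∘ (Equiv.swap (0:Fin 2) 1) :=
    cons_cons_swap y x A
  rw [h1, ha (Equiv.swap (0:Fin 2) 1) (Fin.cons x (Fin.cons y A)), swap01sign,
    snoc_snoc_swap B y x, hs _ (Equiv.swap (Fin.last (p+1)) ((Fin.last p).castSucc)) _]
  ring

/-- `contr ∘ Dop = - Dop ∘ contr` on subscript-symmetric tensors. -/
lemma contr_Dop {q p : ℕ} (v : Pt) (ξ : Tens (q+1) (p+2)) (hs : SymSub ξ)
    (A : Fin (q+1) → Idx) (B : Fin p → Idx) :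
    contr (Dop v ξ) A B = - Dop v (contr ξ) A B := by
  simp only [contr]
  have expand : ∀ C : Idx, Dop v ξ (Fin.cons C A) (Fin.snoc B C)
      = (∑ D : Idx, symbM v D C * ξ A (Fin.cons D (Fin.snoc B C)))
        + ∑ j : Fin (q+1), (-1:ℂ)^((j:ℕ)+1) *
            ∑ D : Idx, symbM v D (A j) * ξ (Fin.cons C (A ∘ j.succAbove))
              (Fin.cons D (Fin.snoc B C)) := by
    intro C
    rw [Dop, Fin.sum_univ_succ]
    congr 1
    · rw [Fin.cons_zero, cons_comp_succAbove_zero]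
      simp
    · refine Finset.sum_congr rfl (fun j _ => ?_)
      rw [Fin.cons_succ, cons_comp_succAbove_succ, Fin.val_succ]
  simp only [expand]
  rw [Finset.sum_add_distrib]
  have part1 : ∑ C : Idx, ∑ D : Idx, symbM v D C * ξ A (Fin.cons D (Fin.snoc B C)) = 0 := by
    apply sum_pair_antisym
      (f := fun C D => symbM v D C * ξ A (Fin.cons D (Fin.snoc B C)))
    intro C D
    rw [symbM_antisymm v D C]
    rw [show (Fin.cons D (Fin.snoc B C) : Fin (p+2) → Idx)
        = (Fin.cons C (Fin.snoc B D)) ∘ (Equiv.swap 0 (Fin.last (p+1))) from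
      (cons_swap_zero_last D C B).symm]
    rw [hs A (Equiv.swap 0 (Fin.last (p+1))) (Fin.cons C (Fin.snoc B D))]
    ring
  rw [part1, zero_add, Finset.sum_comm, Dop, ← Finset.sum_neg_distrib]
  refine Finset.sum_congr rfl (fun j _ => ?_)
  have hc : ∀ D : Idx, contr ξ (A ∘ j.succAbove) (Fin.cons D B)
      = ∑ C : Idx, ξ (Fin.cons C (A ∘ j.succAbove)) (Fin.cons D (Fin.snoc B C)) := by
    intro D
    simp only [contr]
    refine Finset.sum_congr rfl (fun C _ => ?_)
    rw [cons_snoc_comm D C B]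
  calc ∑ C : Idx, (-1:ℂ)^((j:ℕ)+1) *
        ∑ D : Idx, symbM v D (A j) * ξ (Fin.cons C (A ∘ j.succAbove)) (Fin.cons D (Fin.snoc B C))
      = ∑ C : Idx, ∑ D : Idx, (-1:ℂ)^((j:ℕ)+1)
          * (symbM v D (A j) * ξ (Fin.cons C (A ∘ j.succAbove)) (Fin.cons D (Fin.snoc B C))) := by
        refine Finset.sum_congr rfl (fun C _ => ?_)
        rw [Finset.mul_sum]
    _ = ∑ D : Idx, ∑ C : Idx, (-1:ℂ)^((j:ℕ)+1)
          * (symbM v D (A j) * ξ (Fin.cons C (A ∘ j.succAbove)) (Fin.cons D (Fin.snoc B C))) :=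
        Finset.sum_comm
    _ = -((-1:ℂ)^(j:ℕ) * ∑ D : Idx, symbM v D (A j) * contr ξ (A ∘ j.succAbove) (Fin.cons D B)) := by
        simp only [hc, Finset.mul_sum, ← Finset.sum_neg_distrib]
        refine Finset.sum_congr rfl (fun D _ => ?_)
        refine Finset.sum_congr rfl (fun C _ => ?_)
        rw [pow_succ]
        ring

/-- Clifford-based injectivity at level 0. -/
lemma Dop_inj {p : ℕ} {v : Pt} (hv : v ≠ 0) (θ : Tens 0 (p+1))
    (h : ∀ A B, Dop v θ A B = 0) : ∀ A B, θ A B = 0 := by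
  have empty_eq : ∀ (f g : Fin 0 → Idx), f = g := fun f g => funext (fun x => x.elim0)
  have key : ∀ (A : Fin 0 → Idx) (a : Idx) (B' : Fin p → Idx),
      ∑ D : Idx, symbM v D a * θ A (Fin.cons D B') = 0 := by
    intro A a B'
    have h1 := h (fun _ => a) B'
    simp only [Dop, Fin.sum_univ_succ, Fin.sum_univ_zero, add_zero, Fin.val_zero,
      pow_zero, one_mul, Fin.cons_zero] at h1
    rw [empty_eq ((fun _ => a) ∘ (0 : Fin 1).succAbove) A] at h1
    simp only [Fin.sum_univ_succ, Fin.sum_univ_zero, add_zero]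
    exact h1
  intro A B
  have hx : ∀ E : Idx, θ A (Fin.cons E (Fin.tail B)) = 0 := by
    intro E
    have h2 : ∑ a : Idx, (∑ D : Idx, symbM v D a * θ A (Fin.cons D (Fin.tail B)))
        * (starRingEnd ℂ) (symbM v E a) = 0 := by
      simp [key]
    have h3 : ∑ D : Idx, (∑ a : Idx, symbM v D a * (starRingEnd ℂ) (symbM v E a))
        * θ A (Fin.cons D (Fin.tail B)) = 0 := by
      calc ∑ D : Idx, (∑ a : Idx, symbM v D a * (starRingEnd ℂ) (symbM v E a))
            * θ A (Fin.cons D (Fin.tail B))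
          = ∑ D : Idx, ∑ a : Idx, symbM v D a * (starRingEnd ℂ) (symbM v E a)
              * θ A (Fin.cons D (Fin.tail B)) := by
            refine Finset.sum_congr rfl (fun D _ => ?_)
            rw [Finset.sum_mul]
        _ = ∑ a : Idx, ∑ D : Idx, symbM v D a * (starRingEnd ℂ) (symbM v E a)
              * θ A (Fin.cons D (Fin.tail B)) := Finset.sum_comm
        _ = ∑ a : Idx, (∑ D : Idx, symbM v D a * θ A (Fin.cons D (Fin.tail B)))
              * (starRingEnd ℂ) (symbM v E a) := by
            refine Finset.sum_congr rfl (fun a _ => ?_)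
            rw [Finset.sum_mul]
            refine Finset.sum_congr rfl (fun D _ => ?_)
            ring
        _ = 0 := by simp [key]
    simp only [cliff] at h3
    have h4 : rsq v * θ A (Fin.cons E (Fin.tail B)) = 0 := by
      rw [← h3]
      rw [Finset.sum_eq_single E]
      · simp
      · intro D _ hD
        simp [hD]
      · intro hE
        exact absurd (Finset.mem_univ E) hE
    exact (mul_eq_zero.mp h4).resolve_left (rsq_ne_zero hv)
  have hB : B = Fin.cons (B 0) (Fin.tail B) := (Fin.cons_self_tail B).symm
  rw [hB]
  exact hx (B 0)
/-! ### The homotopy identity -/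

lemma homotopy {q p : ℕ} {v : Pt} (hv : v ≠ 0) (ξ : Tens (q+1) (p+1))
    (ha : AntiSup ξ) (hs : SymSub ξ) (A : Fin (q+1) → Idx) (B : Fin (p+1) → Idx) :
    Hop v (Dop v ξ) A B + Dop v (Hop v ξ) A B
      = -(((p+1) + (q+1) : ℕ) : ℂ) * ξ A B := by
  have hDcons : ∀ (E : Idx) (T : Fin p → Idx), Dop v ξ (Fin.cons E A) T
      = (∑ D : Idx, symbM v D E * ξ A (Fin.cons D T))
        + ∑ j : Fin (q+1), (-1:ℂ)^((j:ℕ)+1) *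
            ∑ D : Idx, symbM v D (A j) * ξ (Fin.cons E (A ∘ j.succAbove)) (Fin.cons D T) := by
    intro E T
    rw [Dop, Fin.sum_univ_succ]
    simp only [Fin.cons_zero, Fin.cons_succ, cons_comp_succAbove_zero,
      cons_comp_succAbove_succ, Fin.val_zero, pow_zero, one_mul, Fin.val_succ]
  have hHcons : ∀ (A' : Fin q → Idx) (D : Idx), Hop v ξ A' (Fin.cons D B)
      = (∑ E : Idx, Wmat v D E * ξ (Fin.cons E A') B)
        + ∑ i : Fin (p+1), ∑ E : Idx, Wmat v (B i) E
            * ξ (Fin.cons E A') (Fin.cons D (B ∘ i.succAbove)) := by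
    intro A' D
    rw [Hop, Fin.sum_univ_succ]
    simp only [Fin.cons_zero, Fin.cons_succ, cons_comp_succAbove_zero,
      cons_comp_succAbove_succ]
  have hHD : Hop v (Dop v ξ) A B
      = (∑ i : Fin (p+1), ∑ E : Idx, Wmat v (B i) E
            * ∑ D : Idx, symbM v D E * ξ A (Fin.cons D (B ∘ i.succAbove)))
        + ∑ i : Fin (p+1), ∑ E : Idx, Wmat v (B i) E *
            ∑ j : Fin (q+1), (-1:ℂ)^((j:ℕ)+1) *
              ∑ D : Idx, symbM v D (A j)
                * ξ (Fin.cons E (A ∘ j.succAbove)) (Fin.cons D (B ∘ i.succAbove)) := by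
    rw [Hop, ← Finset.sum_add_distrib]
    refine Finset.sum_congr rfl (fun i _ => ?_)
    rw [← Finset.sum_add_distrib]
    refine Finset.sum_congr rfl (fun E _ => ?_)
    rw [hDcons E (B ∘ i.succAbove), mul_add]
  have hDH : Dop v (Hop v ξ) A B
      = (∑ j : Fin (q+1), (-1:ℂ)^(j:ℕ) * ∑ D : Idx, symbM v D (A j)
            * ∑ E : Idx, Wmat v D E * ξ (Fin.cons E (A ∘ j.succAbove)) B)
        + ∑ j : Fin (q+1), (-1:ℂ)^(j:ℕ) * ∑ D : Idx, symbM v D (A j) *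
            ∑ i : Fin (p+1), ∑ E : Idx, Wmat v (B i) E
              * ξ (Fin.cons E (A ∘ j.succAbove)) (Fin.cons D (B ∘ i.succAbove)) := by
    rw [Dop, ← Finset.sum_add_distrib]
    refine Finset.sum_congr rfl (fun j _ => ?_)
    rw [← mul_add, ← Finset.sum_add_distrib]
    congr 1
    refine Finset.sum_congr rfl (fun D _ => ?_)
    rw [hHcons (A ∘ j.succAbove) D, mul_add]
  have hP1 : ∀ i : Fin (p+1),
      ∑ E : Idx, Wmat v (B i) E * ∑ D : Idx, symbM v D E * ξ A (Fin.cons D (B ∘ i.succAbove))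
      = - ξ A B := by
    intro i
    have h1 : ∑ E : Idx, Wmat v (B i) E
          * ∑ D : Idx, symbM v D E * ξ A (Fin.cons D (B ∘ i.succAbove))
        = ∑ D : Idx, (∑ E : Idx, Wmat v (B i) E * symbM v D E)
            * ξ A (Fin.cons D (B ∘ i.succAbove)) := by
      calc ∑ E : Idx, Wmat v (B i) E
            * ∑ D : Idx, symbM v D E * ξ A (Fin.cons D (B ∘ i.succAbove))
          = ∑ E : Idx, ∑ D : Idx, Wmat v (B i) E
              * (symbM v D E * ξ A (Fin.cons D (B ∘ i.succAbove))) := by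
            refine Finset.sum_congr rfl (fun E _ => ?_)
            rw [Finset.mul_sum]
        _ = ∑ D : Idx, ∑ E : Idx, Wmat v (B i) E
              * (symbM v D E * ξ A (Fin.cons D (B ∘ i.succAbove))) := Finset.sum_comm
        _ = _ := by
            refine Finset.sum_congr rfl (fun D _ => ?_)
            rw [Finset.sum_mul]
            refine Finset.sum_congr rfl (fun E _ => ?_)
            ring
    rw [h1]
    simp only [WM1 hv]
    have h2 : ∑ D : Idx, -(if D = B i then (1:ℂ) else 0)
          * ξ A (Fin.cons D (B ∘ i.succAbove))
        = - ξ A (Fin.cons (B i) (B ∘ i.succAbove)) := by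
      rw [Finset.sum_eq_single (B i)]
      · simp
      · intro D _ hD
        simp [hD]
      · intro hmem
        exact absurd (Finset.mem_univ _) hmem
    rw [h2, cons_self_comp B i, hs A (i.cycleRange.symm) B]
  have hsgn : ∀ j : Fin (q+1), ((Equiv.Perm.sign ((j.cycleRange).symm) : ℤ) : ℂ)
      = (-1:ℂ)^(j:ℕ) := by
    intro j
    rw [← Equiv.Perm.inv_def, Equiv.Perm.sign_inv, Fin.sign_cycleRange]
    push_cast
    ring_nf
  have hsq : ∀ j : Fin (q+1), (-1:ℂ)^(j:ℕ) * (-1:ℂ)^(j:ℕ) = 1 := by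
    intro j
    rw [← pow_add]
    exact Even.neg_one_pow ⟨(j:ℕ), rfl⟩
  have hP2 : ∀ j : Fin (q+1),
      (-1:ℂ)^(j:ℕ) * ∑ D : Idx, symbM v D (A j)
          * ∑ E : Idx, Wmat v D E * ξ (Fin.cons E (A ∘ j.succAbove)) B
      = - ξ A B := by
    intro j
    have h1 : ∑ D : Idx, symbM v D (A j)
          * ∑ E : Idx, Wmat v D E * ξ (Fin.cons E (A ∘ j.succAbove)) B
        = ∑ E : Idx, (∑ D : Idx, Wmat v D E * symbM v D (A j))
            * ξ (Fin.cons E (A ∘ j.succAbove)) B := by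
      calc ∑ D : Idx, symbM v D (A j)
            * ∑ E : Idx, Wmat v D E * ξ (Fin.cons E (A ∘ j.succAbove)) B
          = ∑ D : Idx, ∑ E : Idx, symbM v D (A j)
              * (Wmat v D E * ξ (Fin.cons E (A ∘ j.succAbove)) B) := by
            refine Finset.sum_congr rfl (fun D _ => ?_)
            rw [Finset.mul_sum]
        _ = ∑ E : Idx, ∑ D : Idx, symbM v D (A j)
              * (Wmat v D E * ξ (Fin.cons E (A ∘ j.succAbove)) B) := Finset.sum_comm
        _ = _ := by
            refine Finset.sum_congr rfl (fun E _ => ?_)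
            rw [Finset.sum_mul]
            refine Finset.sum_congr rfl (fun D _ => ?_)
            ring
    rw [h1]
    simp only [WM2 hv]
    have h2 : ∑ E : Idx, -(if E = A j then (1:ℂ) else 0)
          * ξ (Fin.cons E (A ∘ j.succAbove)) B
        = - ξ (Fin.cons (A j) (A ∘ j.succAbove)) B := by
      rw [Finset.sum_eq_single (A j)]
      · simp
      · intro E _ hE
        simp [hE]
      · intro hmem
        exact absurd (Finset.mem_univ _) hmem
    rw [h2, cons_self_comp A j, ha (j.cycleRange.symm) A B, hsgn j]
    calc (-1:ℂ)^(j:ℕ) * -((-1:ℂ)^(j:ℕ) * ξ A B)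
        = -(((-1:ℂ)^(j:ℕ) * (-1:ℂ)^(j:ℕ)) * ξ A B) := by ring
      _ = - ξ A B := by rw [hsq j, one_mul]
  -- cross terms
  have hX : ∑ i : Fin (p+1), ∑ E : Idx, Wmat v (B i) E *
      ∑ j : Fin (q+1), (-1:ℂ)^((j:ℕ)+1) *
        ∑ D : Idx, symbM v D (A j)
          * ξ (Fin.cons E (A ∘ j.succAbove)) (Fin.cons D (B ∘ i.succAbove))
      = ∑ i : Fin (p+1), ∑ j : Fin (q+1), ∑ D : Idx, ∑ E : Idx,
          -((-1:ℂ)^(j:ℕ) * (Wmat v (B i) E * (symbM v D (A j)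
            * ξ (Fin.cons E (A ∘ j.succAbove)) (Fin.cons D (B ∘ i.succAbove))))) := by
    refine Finset.sum_congr rfl (fun i _ => ?_)
    calc ∑ E : Idx, Wmat v (B i) E *
          ∑ j : Fin (q+1), (-1:ℂ)^((j:ℕ)+1) *
            ∑ D : Idx, symbM v D (A j)
              * ξ (Fin.cons E (A ∘ j.succAbove)) (Fin.cons D (B ∘ i.succAbove))
        = ∑ E : Idx, ∑ j : Fin (q+1), ∑ D : Idx,
            Wmat v (B i) E * ((-1:ℂ)^((j:ℕ)+1) * (symbM v D (A j)
              * ξ (Fin.cons E (A ∘ j.succAbove)) (Fin.cons D (B ∘ i.succAbove)))) := by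
          refine Finset.sum_congr rfl (fun E _ => ?_)
          rw [Finset.mul_sum]
          refine Finset.sum_congr rfl (fun j _ => ?_)
          rw [Finset.mul_sum, Finset.mul_sum]
      _ = ∑ j : Fin (q+1), ∑ E : Idx, ∑ D : Idx,
            Wmat v (B i) E * ((-1:ℂ)^((j:ℕ)+1) * (symbM v D (A j)
              * ξ (Fin.cons E (A ∘ j.succAbove)) (Fin.cons D (B ∘ i.succAbove)))) :=
          Finset.sum_comm
      _ = ∑ j : Fin (q+1), ∑ D : Idx, ∑ E : Idx,
            Wmat v (B i) E * ((-1:ℂ)^((j:ℕ)+1) * (symbM v D (A j)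
              * ξ (Fin.cons E (A ∘ j.succAbove)) (Fin.cons D (B ∘ i.succAbove)))) :=
          Finset.sum_congr rfl (fun j _ => Finset.sum_comm)
      _ = _ := by
          refine Finset.sum_congr rfl (fun j _ => ?_)
          refine Finset.sum_congr rfl (fun D _ => ?_)
          refine Finset.sum_congr rfl (fun E _ => ?_)
          rw [pow_succ]
          ring
  have hY : ∑ j : Fin (q+1), (-1:ℂ)^(j:ℕ) * ∑ D : Idx, symbM v D (A j) *
      ∑ i : Fin (p+1), ∑ E : Idx, Wmat v (B i) E
        * ξ (Fin.cons E (A ∘ j.succAbove)) (Fin.cons D (B ∘ i.succAbove))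
      = ∑ i : Fin (p+1), ∑ j : Fin (q+1), ∑ D : Idx, ∑ E : Idx,
          (-1:ℂ)^(j:ℕ) * (Wmat v (B i) E * (symbM v D (A j)
            * ξ (Fin.cons E (A ∘ j.succAbove)) (Fin.cons D (B ∘ i.succAbove)))) := by
    calc ∑ j : Fin (q+1), (-1:ℂ)^(j:ℕ) * ∑ D : Idx, symbM v D (A j) *
          ∑ i : Fin (p+1), ∑ E : Idx, Wmat v (B i) E
            * ξ (Fin.cons E (A ∘ j.succAbove)) (Fin.cons D (B ∘ i.succAbove))
        = ∑ j : Fin (q+1), ∑ D : Idx, ∑ i : Fin (p+1), ∑ E : Idx,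
            (-1:ℂ)^(j:ℕ) * (Wmat v (B i) E * (symbM v D (A j)
              * ξ (Fin.cons E (A ∘ j.succAbove)) (Fin.cons D (B ∘ i.succAbove)))) := by
          refine Finset.sum_congr rfl (fun j _ => ?_)
          rw [Finset.mul_sum]
          refine Finset.sum_congr rfl (fun D _ => ?_)
          rw [Finset.mul_sum, Finset.mul_sum]
          refine Finset.sum_congr rfl (fun i _ => ?_)
          rw [Finset.mul_sum, Finset.mul_sum]
          refine Finset.sum_congr rfl (fun E _ => ?_)
          ring
      _ = ∑ j : Fin (q+1), ∑ i : Fin (p+1), ∑ D : Idx, ∑ E : Idx,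
            (-1:ℂ)^(j:ℕ) * (Wmat v (B i) E * (symbM v D (A j)
              * ξ (Fin.cons E (A ∘ j.succAbove)) (Fin.cons D (B ∘ i.succAbove)))) :=
          Finset.sum_congr rfl (fun j _ => Finset.sum_comm)
      _ = _ := Finset.sum_comm
  rw [hHD, hDH]
  have hsum1 : ∑ i : Fin (p+1), ∑ E : Idx, Wmat v (B i) E
      * ∑ D : Idx, symbM v D E * ξ A (Fin.cons D (B ∘ i.succAbove))
      = -((p+1 : ℕ) : ℂ) * ξ A B := by
    simp only [hP1]
    rw [Finset.sum_const, Finset.card_univ, Fintype.card_fin, nsmul_eq_mul]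
    push_cast
    ring
  have hsum2 : ∑ j : Fin (q+1), (-1:ℂ)^(j:ℕ) * ∑ D : Idx, symbM v D (A j)
      * ∑ E : Idx, Wmat v D E * ξ (Fin.cons E (A ∘ j.succAbove)) B
      = -((q+1 : ℕ) : ℂ) * ξ A B := by
    simp only [hP2]
    rw [Finset.sum_const, Finset.card_univ, Fintype.card_fin, nsmul_eq_mul]
    push_cast
    ring
  rw [hsum1, hsum2, hX, hY]
  have hcancel : ∑ i : Fin (p+1), ∑ j : Fin (q+1), ∑ D : Idx, ∑ E : Idx,
        -((-1:ℂ)^(j:ℕ) * (Wmat v (B i) E * (symbM v D (A j)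
          * ξ (Fin.cons E (A ∘ j.succAbove)) (Fin.cons D (B ∘ i.succAbove)))))
      + ∑ i : Fin (p+1), ∑ j : Fin (q+1), ∑ D : Idx, ∑ E : Idx,
        (-1:ℂ)^(j:ℕ) * (Wmat v (B i) E * (symbM v D (A j)
          * ξ (Fin.cons E (A ∘ j.succAbove)) (Fin.cons D (B ∘ i.succAbove)))) = 0 := by
    rw [← Finset.sum_add_distrib]
    refine Finset.sum_eq_zero (fun i _ => ?_)
    rw [← Finset.sum_add_distrib]
    refine Finset.sum_eq_zero (fun j _ => ?_)
    rw [← Finset.sum_add_distrib]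
    refine Finset.sum_eq_zero (fun D _ => ?_)
    rw [← Finset.sum_add_distrib]
    refine Finset.sum_eq_zero (fun E _ => ?_)
    ring
  calc -((p+1 : ℕ) : ℂ) * ξ A B
        + (∑ i : Fin (p+1), ∑ j : Fin (q+1), ∑ D : Idx, ∑ E : Idx,
          -((-1:ℂ)^(j:ℕ) * (Wmat v (B i) E * (symbM v D (A j)
            * ξ (Fin.cons E (A ∘ j.succAbove)) (Fin.cons D (B ∘ i.succAbove))))))
        + (-((q+1 : ℕ) : ℂ) * ξ A B
          + ∑ i : Fin (p+1), ∑ j : Fin (q+1), ∑ D : Idx, ∑ E : Idx,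
            (-1:ℂ)^(j:ℕ) * (Wmat v (B i) E * (symbM v D (A j)
              * ξ (Fin.cons E (A ∘ j.succAbove)) (Fin.cons D (B ∘ i.succAbove)))))
      = -((p+1 : ℕ) : ℂ) * ξ A B + -((q+1 : ℕ) : ℂ) * ξ A B
        + ((∑ i : Fin (p+1), ∑ j : Fin (q+1), ∑ D : Idx, ∑ E : Idx,
          -((-1:ℂ)^(j:ℕ) * (Wmat v (B i) E * (symbM v D (A j)
            * ξ (Fin.cons E (A ∘ j.succAbove)) (Fin.cons D (B ∘ i.succAbove))))))
          + ∑ i : Fin (p+1), ∑ j : Fin (q+1), ∑ D : Idx, ∑ E : Idx,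
            (-1:ℂ)^(j:ℕ) * (Wmat v (B i) E * (symbM v D (A j)
              * ξ (Fin.cons E (A ∘ j.succAbove)) (Fin.cons D (B ∘ i.succAbove))))) := by
        ring
    _ = -(((p+1) + (q+1) : ℕ) : ℂ) * ξ A B := by
        rw [hcancel, add_zero]
        push_cast
        ring
/-! ### contraction of the homotopy, and `Dop ∘ Dop = 0` -/

lemma sign_swap01 {n : ℕ} : ((Equiv.Perm.sign (Equiv.swap (0 : Fin (n+2)) 1) : ℤ) : ℂ) = -1 := by
  rw [Equiv.Perm.sign_swap (by simp [Fin.ext_iff])]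
  simp

/-- contraction of `Hop ξ` for trace-free antisymmetric `ξ`: only the `W`-trace survives. -/
lemma contr_Hop {q p : ℕ} (v : Pt) (ξ : Tens (q+2) (p+1)) (ha : AntiSup ξ)
    (htf : ∀ A B, contr ξ A B = 0) (A : Fin q → Idx) (B : Fin (p+1) → Idx) :
    contr (Hop v ξ) A B
      = ∑ C : Idx, ∑ E : Idx, Wmat v C E * ξ (Fin.cons E (Fin.cons C A)) B := by
  simp only [contr, Hop]
  have expand : ∀ C : Idx, ∑ i : Fin (p+2), ∑ E : Idx,
      Wmat v ((Fin.snoc B C : Fin (p+2) → Idx) i) E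
      * ξ (Fin.cons E (Fin.cons C A)) ((Fin.snoc B C : Fin (p+2) → Idx) ∘ i.succAbove)
      = (∑ i : Fin (p+1), ∑ E : Idx, Wmat v (B i) E
          * ξ (Fin.cons E (Fin.cons C A)) (Fin.snoc (B ∘ i.succAbove) C))
        + ∑ E : Idx, Wmat v C E * ξ (Fin.cons E (Fin.cons C A)) B := by
    intro C
    rw [Fin.sum_univ_castSucc]
    congr 1
    · refine Finset.sum_congr rfl (fun i _ => ?_)
      refine Finset.sum_congr rfl (fun E _ => ?_)
      rw [Fin.snoc_castSucc, snoc_comp_succAbove_castSucc]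
    · rw [Fin.snoc_last, snoc_comp_succAbove_last]
  simp only [expand]
  rw [Finset.sum_add_distrib]
  have hzero : ∑ C : Idx, ∑ i : Fin (p+1), ∑ E : Idx, Wmat v (B i) E
      * ξ (Fin.cons E (Fin.cons C A)) (Fin.snoc (B ∘ i.succAbove) C) = 0 := by
    rw [Finset.sum_comm]
    refine Finset.sum_eq_zero (fun i _ => ?_)
    rw [Finset.sum_comm]
    refine Finset.sum_eq_zero (fun E _ => ?_)
    rw [← Finset.mul_sum]
    have h1 : ∑ C : Idx, ξ (Fin.cons E (Fin.cons C A)) (Fin.snoc (B ∘ i.succAbove) C)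
        = - ∑ C : Idx, ξ (Fin.cons C (Fin.cons E A)) (Fin.snoc (B ∘ i.succAbove) C) := by
      rw [← Finset.sum_neg_distrib]
      refine Finset.sum_congr rfl (fun C _ => ?_)
      rw [cons_cons_swap E C A, ha (Equiv.swap 0 1) (Fin.cons C (Fin.cons E A)), sign_swap01]
      ring
    have h2 := htf (Fin.cons E A) (B ∘ i.succAbove)
    simp only [contr] at h2
    rw [h1, h2]
    simp
  rw [hzero, zero_add]

/-- auxiliary: swapping the two `M`-contractions on a subscript-symmetric tensor. -/
lemma Dop_pair_swap {p : ℕ} {v : Pt} {n : ℕ} (Ξ : Tens n (p+2)) (hs : SymSub Ξ)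
    (Y : Fin n → Idx) (B : Fin p → Idx) (x y : Idx) :
    ∑ D : Idx, symbM v D x * ∑ E : Idx, symbM v E y * Ξ Y (Fin.cons E (Fin.cons D B))
    = ∑ D : Idx, symbM v D y * ∑ E : Idx, symbM v E x * Ξ Y (Fin.cons E (Fin.cons D B)) := by
  have flat : ∀ x' y' : Idx, ∑ D : Idx, symbM v D x'
        * ∑ E : Idx, symbM v E y' * Ξ Y (Fin.cons E (Fin.cons D B))
      = ∑ D : Idx, ∑ E : Idx, symbM v D x'
          * (symbM v E y' * Ξ Y (Fin.cons E (Fin.cons D B))) := by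
    intro x' y'
    refine Finset.sum_congr rfl (fun D _ => ?_)
    rw [Finset.mul_sum]
  rw [flat x y, flat y x]
  rw [show ∑ D : Idx, ∑ E : Idx, symbM v D y
      * (symbM v E x * Ξ Y (Fin.cons E (Fin.cons D B)))
    = ∑ E : Idx, ∑ D : Idx, symbM v D y
      * (symbM v E x * Ξ Y (Fin.cons E (Fin.cons D B))) from Finset.sum_comm]
  refine Finset.sum_congr rfl (fun D _ => ?_)
  refine Finset.sum_congr rfl (fun E _ => ?_)
  have hswap : Ξ Y (Fin.cons D (Fin.cons E B)) = Ξ Y (Fin.cons E (Fin.cons D B)) := by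
    rw [cons_cons_swap D E B, hs Y (Equiv.swap 0 1) (Fin.cons E (Fin.cons D B))]
  rw [hswap]
  ring

/-- `Dop ∘ Dop = 0` starting from level 0. -/
lemma DopDop0 {p : ℕ} {v : Pt} (Ξ : Tens 0 (p+2)) (hs : SymSub Ξ)
    (A : Fin 2 → Idx) (B : Fin p → Idx) :
    Dop v (Dop v Ξ) A B = 0 := by
  have empty_eq : ∀ (f g : Fin 0 → Idx), f = g := fun f g => funext (fun x => x.elim0)
  have hval0 : (A ∘ (0 : Fin 2).succAbove) 0 = A 1 := by
    rw [Function.comp_apply]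
    congr 1
  have hval1 : (A ∘ (1 : Fin 2).succAbove) 0 = A 0 := by
    rw [Function.comp_apply]
    congr 1
  have hinner : ∀ (A₁ : Fin 1 → Idx) (T : Fin (p+1) → Idx), Dop v Ξ A₁ T
      = ∑ E : Idx, symbM v E (A₁ 0)
          * Ξ ((fun _ => (0:Idx)) : Fin 0 → Idx) (Fin.cons E T) := by
    intro A₁ T
    rw [Dop, Fin.sum_univ_one]
    simp only [Fin.val_zero, pow_zero, one_mul]
    rw [empty_eq (A₁ ∘ (0 : Fin 1).succAbove) (fun _ => (0:Idx))]
  rw [Dop, Fin.sum_univ_two]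
  simp only [hinner, hval0, hval1, Fin.val_zero, Fin.val_one, pow_zero, pow_one, one_mul,
    neg_one_mul]
  have := Dop_pair_swap (v := v) Ξ hs (fun _ => (0:Idx)) B (A 0) (A 1)
  linear_combination this

/-- `Dop ∘ Dop = 0` starting from level 1. -/
lemma DopDop1 {p : ℕ} {v : Pt} (Ξ : Tens 1 (p+2)) (hs : SymSub Ξ)
    (A : Fin 3 → Idx) (B : Fin p → Idx) :
    Dop v (Dop v Ξ) A B = 0 := by
  have harg : ∀ (u : Fin 3) (w : Fin 2) (y : Fin 3), (u.succAbove (w.succAbove 0) = y) →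
      ((A ∘ u.succAbove) ∘ w.succAbove) = (fun _ : Fin 1 => A y) := by
    intro u w y hy
    funext t
    have ht : t = 0 := Subsingleton.elim t 0
    subst ht
    simp only [Function.comp_apply]
    rw [hy]
  have hval : ∀ (u : Fin 3) (w : Fin 2) (x : Fin 3), (u.succAbove w = x) →
      (A ∘ u.succAbove) w = A x := by
    intro u w x hx
    rw [Function.comp_apply, hx]
  have hinner : ∀ (A₁ : Fin 2 → Idx) (T : Fin (p+1) → Idx), Dop v Ξ A₁ T
      = (∑ E : Idx, symbM v E (A₁ 0) * Ξ (A₁ ∘ (0:Fin 2).succAbove) (Fin.cons E T))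
        - ∑ E : Idx, symbM v E (A₁ 1) * Ξ (A₁ ∘ (1:Fin 2).succAbove) (Fin.cons E T) := by
    intro A₁ T
    rw [Dop, Fin.sum_univ_two]
    simp only [Fin.val_zero, Fin.val_one, pow_zero, pow_one, one_mul, neg_one_mul]
    ring
  rw [Dop, Fin.sum_univ_three]
  simp only [hinner]
  rw [hval 0 0 1 (by decide), hval 0 1 2 (by decide), hval 1 0 0 (by decide),
    hval 1 1 2 (by decide), hval 2 0 0 (by decide), hval 2 1 1 (by decide),
    harg 0 0 (2:Fin 3) (by decide), harg 0 1 (1:Fin 3) (by decide), harg 1 0 (2:Fin 3) (by decide),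
    harg 1 1 (0:Fin 3) (by decide), harg 2 0 (1:Fin 3) (by decide), harg 2 1 (0:Fin 3) (by decide)]
  simp only [mul_sub, Finset.sum_sub_distrib,
    show ((0:Fin 3):ℕ) = 0 from rfl, show ((1:Fin 3):ℕ) = 1 from rfl,
    show ((2:Fin 3):ℕ) = 2 from rfl,
    show ((0:Fin 3) : Idx) = (0:Idx) from rfl,
    show ((1:Fin 3) : Idx) = (1:Idx) from rfl,
    show ((2:Fin 3) : Idx) = (2:Idx) from rfl]
  have P1 := Dop_pair_swap (v := v) Ξ hs (fun _ => A (2:Fin 3)) B (A 0) (A 1)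
  have P2 := Dop_pair_swap (v := v) Ξ hs (fun _ => A (1:Fin 3)) B (A 0) (A 2)
  have P3 := Dop_pair_swap (v := v) Ξ hs (fun _ => A (0:Fin 3)) B (A 1) (A 2)
  linear_combination P1 - P2 + P3
/-! ### The top-level lemma: `Dop` kills trace-free antisymmetric 3-tensors -/

lemma symbM_diag (v : Pt) (a : Idx) : symbM v a a = 0 := by
  have h := symbM_antisymm v a a
  have h2 : (2:ℂ) * symbM v a a = 0 := by linear_combination h
  exact (mul_eq_zero.mp h2).resolve_left (by norm_num)

lemma Dop_V3 {p : ℕ} {v : Pt} (ξ : Tens 3 (p+1)) (ha : AntiSup ξ) (hs : SymSub ξ)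
    (htf : ∀ A B, contr ξ A B = 0) (A : Fin 4 → Idx) (B : Fin p → Idx) :
    Dop v ξ A B = 0 := by
  have hDfun : ∀ (A' : Fin 4 → Idx) (B' : Fin p → Idx), Dop v ξ A' B'
      = ((3+1:ℕ) : ℂ) * symb v ξ A' B' := by
    intro A' B'
    rw [symb_eq_Dop v ξ ha A' B', ← mul_assoc, mul_inv_cancel₀ (by norm_num), one_mul]
  have hDA : AntiSup (Dop v ξ) := by
    intro π A' B'
    rw [hDfun (A' ∘ π) B', hDfun A' B', symb_antiSup v ξ π A' B']
    ring
  have hid : ∀ B' : Fin p → Idx, Dop v ξ (fun t : Fin 4 => t) B' = 0 := by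
    intro B'
    have htr : ∀ F G : Idx, ∑ C : Idx, ξ ![C, F, G] (Fin.cons C B') = 0 := by
      intro F G
      have h := htf ![F, G] B'
      rw [contr_rot ξ hs] at h
      exact h
    have A01 : ∀ (x y z : Idx) (S : Fin (p+1) → Idx), ξ ![y, x, z] S = -ξ ![x, y, z] S := by
      intro x y z S
      have hcomp : (![y, x, z] : Fin 3 → Idx) = ![x, y, z] ∘ (Equiv.swap (0:Fin 3) 1) := by
        funext t
        fin_cases t <;>
          simp [Equiv.swap_apply_def, Matrix.cons_val_zero, Matrix.cons_val_one,
            Matrix.head_cons, Matrix.cons_val_succ]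
      rw [hcomp, ha (Equiv.swap (0:Fin 3) 1) ![x,y,z] S,
        Equiv.Perm.sign_swap (by decide : (0:Fin 3) ≠ 1)]
      norm_num
    have A12 : ∀ (x y z : Idx) (S : Fin (p+1) → Idx), ξ ![x, z, y] S = -ξ ![x, y, z] S := by
      intro x y z S
      have hcomp : (![x, z, y] : Fin 3 → Idx) = ![x, y, z] ∘ (Equiv.swap (1:Fin 3) 2) := by
        funext t
        fin_cases t <;>
          simp [Equiv.swap_apply_def, Matrix.cons_val_zero, Matrix.cons_val_one,
            Matrix.head_cons, Matrix.cons_val_succ]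
      rw [hcomp, ha (Equiv.swap (1:Fin 3) 2) ![x,y,z] S,
        Equiv.Perm.sign_swap (by decide : (1:Fin 3) ≠ 2)]
      norm_num
    have Arot2 : ∀ (x y z : Idx) (S : Fin (p+1) → Idx), ξ ![z, x, y] S = ξ ![x, y, z] S := by
      intro x y z S
      rw [A01 x z y S, A12 x y z S]
      ring
    have hrep : ∀ (T : Fin 3 → Idx) (i j : Fin 3), i ≠ j → T i = T j →
        ∀ S : Fin (p+1) → Idx, ξ T S = 0 :=
      fun T i j hij hT S => antiSup_repeat ha hij hT S
    have e23 : ξ ![0,2,3] (Fin.cons 0 B') + ξ ![1,2,3] (Fin.cons 1 B') = 0 := by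
      have h := htr 2 3
      rw [Fin.sum_univ_four] at h
      rw [hrep ![2,2,3] 0 1 (by decide) (by decide) _,
        hrep ![3,2,3] 0 2 (by decide) (by decide) _] at h
      linear_combination h
    have e13 : ξ ![0,1,3] (Fin.cons 0 B') - ξ ![1,2,3] (Fin.cons 2 B') = 0 := by
      have h := htr 1 3
      rw [Fin.sum_univ_four] at h
      rw [hrep ![1,1,3] 0 1 (by decide) (by decide) _,
        hrep ![3,1,3] 0 2 (by decide) (by decide) _,
        A01 1 2 3 (Fin.cons 2 B')] at h
      linear_combination h
    have e12 : ξ ![0,1,2] (Fin.cons 0 B') + ξ ![1,2,3] (Fin.cons 3 B') = 0 := by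
      have h := htr 1 2
      rw [Fin.sum_univ_four] at h
      rw [hrep ![1,1,2] 0 1 (by decide) (by decide) _,
        hrep ![2,1,2] 0 2 (by decide) (by decide) _,
        Arot2 1 2 3 (Fin.cons 3 B')] at h
      linear_combination h
    have e03 : ξ ![0,1,3] (Fin.cons 1 B') + ξ ![0,2,3] (Fin.cons 2 B') = 0 := by
      have h := htr 0 3
      rw [Fin.sum_univ_four] at h
      rw [hrep ![0,0,3] 0 1 (by decide) (by decide) _,
        hrep ![3,0,3] 0 2 (by decide) (by decide) _,
        A01 0 1 3 (Fin.cons 1 B'), A01 0 2 3 (Fin.cons 2 B')] at h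
      linear_combination -h
    have e02 : ξ ![0,1,2] (Fin.cons 1 B') - ξ ![0,2,3] (Fin.cons 3 B') = 0 := by
      have h := htr 0 2
      rw [Fin.sum_univ_four] at h
      rw [hrep ![0,0,2] 0 1 (by decide) (by decide) _,
        hrep ![2,0,2] 0 2 (by decide) (by decide) _,
        A01 0 1 2 (Fin.cons 1 B'), Arot2 0 2 3 (Fin.cons 3 B')] at h
      linear_combination -h
    have e01 : ξ ![0,1,2] (Fin.cons 2 B') + ξ ![0,1,3] (Fin.cons 3 B') = 0 := by
      have h := htr 0 1
      rw [Fin.sum_univ_four] at h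
      rw [hrep ![0,0,1] 0 1 (by decide) (by decide) _,
        hrep ![1,0,1] 0 2 (by decide) (by decide) _,
        Arot2 0 1 2 (Fin.cons 2 B'), Arot2 0 1 3 (Fin.cons 3 B')] at h
      linear_combination h
    have hc0 : ((fun t : Fin 4 => t) ∘ (0:Fin 4).succAbove) = ![1,2,3] := by
      funext t; fin_cases t <;> decide
    have hc1 : ((fun t : Fin 4 => t) ∘ (1:Fin 4).succAbove) = ![0,2,3] := by
      funext t; fin_cases t <;> decide
    have hc2 : ((fun t : Fin 4 => t) ∘ (2:Fin 4).succAbove) = ![0,1,3] := by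
      funext t; fin_cases t <;> decide
    have hc3 : ((fun t : Fin 4 => t) ∘ (3:Fin 4).succAbove) = ![0,1,2] := by
      funext t; fin_cases t <;> decide
    rw [Dop, Fin.sum_univ_four]
    simp only [hc0, hc1, hc2, hc3, Fin.sum_univ_four, symbM_diag,
      show ((0:Fin 4):ℕ) = 0 from rfl, show ((1:Fin 4):ℕ) = 1 from rfl,
      show ((2:Fin 4):ℕ) = 2 from rfl, show ((3:Fin 4):ℕ) = 3 from rfl]
    rw [symbM_antisymm v 0 1, symbM_antisymm v 0 2, symbM_antisymm v 0 3,
      symbM_antisymm v 1 2, symbM_antisymm v 1 3, symbM_antisymm v 2 3]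
    linear_combination (symbM v 1 0) * e23 - (symbM v 2 0) * e13 + (symbM v 3 0) * e12
      - (symbM v 2 1) * e03 + (symbM v 3 1) * e02 + (symbM v 3 2) * e01
  by_cases hinj : Function.Injective A
  · have hbij : Function.Bijective A := Finite.injective_iff_bijective.mp hinj
    have hAeq : A = (fun t : Fin 4 => t) ∘ (Equiv.ofBijective A hbij) := by
      funext t
      rfl
    rw [hAeq, hDA (Equiv.ofBijective A hbij) (fun t : Fin 4 => t) B, hid B, mul_zero]
  · rw [Function.not_injective_iff] at hinj
    obtain ⟨a, b, hab, hne⟩ := hinj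
    exact antiSup_repeat hDA hne hab B
/-! ### Correction tensors for surjectivity -/

/-- trace insertion `δ^{[A₀}_{B_i} θ^{A₁]}` (slot form, unnormalized). -/
def Phi {p : ℕ} (θ : Tens 1 (p+1)) : Tens 2 (p+2) :=
  fun A B => ∑ i : Fin (p+2),
    ((if A 0 = B i then (1:ℂ) else 0) * θ (fun _ => A 1) (B ∘ i.succAbove)
      - (if A 1 = B i then (1:ℂ) else 0) * θ (fun _ => A 0) (B ∘ i.succAbove))

/-- `M^{A₀A₁} κ_B`. -/
def Psi (v : Pt) {p : ℕ} (κ : Tens 0 (p+2)) : Tens 2 (p+2) :=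
  fun A B => symbM v (A 0) (A 1) * κ Fin.elim0 B

lemma perm_fin2 : ∀ π : Equiv.Perm (Fin 2), π = 1 ∨ π = Equiv.swap 0 1 := by decide

lemma cons_empty (C : Idx) (f : Fin 0 → Idx) : (Fin.cons C f : Fin 1 → Idx) = fun _ => C := by
  funext t
  refine Fin.cases rfl (fun s => s.elim0) t

lemma one_tuple_eq (A : Fin 1 → Idx) : A = fun _ => A 0 := by
  funext t
  have : t = 0 := Subsingleton.elim t 0
  rw [this]

lemma snoc_self_comp {n : ℕ} {α : Type*} (B : Fin (n+1) → α) (i : Fin (n+1)) :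
    Fin.snoc (B ∘ i.succAbove) (B i) = B ∘ ((finRotate (n+1)).trans (i.cycleRange.symm)) := by
  funext t
  refine Fin.lastCases ?_ (fun s => ?_) t
  · rw [Fin.snoc_last, Function.comp_apply, Equiv.trans_apply, finRotate_last,
      Fin.cycleRange_symm_zero]
  · rw [Fin.snoc_castSucc]
    simp only [Function.comp_apply, Equiv.trans_apply]
    rw [finRotate_succ_apply,
      show ((Fin.castSucc s) + 1) = s.succ from by rw [← Fin.coeSucc_eq_succ],
      Fin.cycleRange_symm_succ]

lemma Phi_symSub {p : ℕ} (θ : Tens 1 (p+1)) (hsθ : SymSub θ) : SymSub (Phi θ) := by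
  intro A π B
  simp only [Phi]
  rw [Finset.sum_sub_distrib, Finset.sum_sub_distrib]
  congr 1
  · exact slot_sum_symm (fun x T => (if A 0 = x then (1:ℂ) else 0) * θ (fun _ => A 1) T)
      (fun x e T => by simp only [hsθ (fun _ => A 1) e T]) π B
  · exact slot_sum_symm (fun x T => (if A 1 = x then (1:ℂ) else 0) * θ (fun _ => A 0) T)
      (fun x e T => by simp only [hsθ (fun _ => A 0) e T]) π B

lemma Phi_antiSup {p : ℕ} (θ : Tens 1 (p+1)) : AntiSup (Phi θ) := by
  intro π A B
  rcases perm_fin2 π with h | h <;> subst h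
  · simp only [Equiv.Perm.coe_one, Function.comp_id, map_one]
    norm_num
  · have h0 : (A ∘ (Equiv.swap (0:Fin 2) 1)) 0 = A 1 := by
      rw [Function.comp_apply, show (Equiv.swap (0:Fin 2) 1) 0 = 1 from by decide]
    have h1 : (A ∘ (Equiv.swap (0:Fin 2) 1)) 1 = A 0 := by
      rw [Function.comp_apply, show (Equiv.swap (0:Fin 2) 1) 1 = 0 from by decide]
    simp only [Phi, h0, h1]
    rw [Equiv.Perm.sign_swap (by decide : (0:Fin 2) ≠ 1)]
    push_cast
    rw [neg_one_mul, ← Finset.sum_neg_distrib]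
    refine Finset.sum_congr rfl (fun i _ => ?_)
    ring

lemma Psi_symSub (v : Pt) {p : ℕ} (κ : Tens 0 (p+2)) (hsκ : SymSub κ) :
    SymSub (Psi v κ) := by
  intro A π B
  simp only [Psi]
  rw [hsκ Fin.elim0 π B]

lemma Psi_antiSup (v : Pt) {p : ℕ} (κ : Tens 0 (p+2)) : AntiSup (Psi v κ) := by
  intro π A B
  rcases perm_fin2 π with h | h <;> subst h
  · simp only [Equiv.Perm.coe_one, Function.comp_id, map_one]
    norm_num
  · have h0 : (A ∘ (Equiv.swap (0:Fin 2) 1)) 0 = A 1 := by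
      rw [Function.comp_apply, show (Equiv.swap (0:Fin 2) 1) 0 = 1 from by decide]
    have h1 : (A ∘ (Equiv.swap (0:Fin 2) 1)) 1 = A 0 := by
      rw [Function.comp_apply, show (Equiv.swap (0:Fin 2) 1) 1 = 0 from by decide]
    simp only [Psi, h0, h1]
    rw [symbM_antisymm v (A 1) (A 0),
      Equiv.Perm.sign_swap (by decide : (0:Fin 2) ≠ 1)]
    push_cast
    ring

lemma contr_Phi {p : ℕ} (θ : Tens 1 (p+1)) (hsθ : SymSub θ)
    (hcθ : ∀ T : Fin p → Idx, ∑ C : Idx, θ (fun _ => C) (Fin.snoc T C) = 0)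
    (A : Fin 1 → Idx) (B : Fin (p+1) → Idx) :
    contr (Phi θ) A B = ((p+4 : ℕ) : ℂ) * θ A B := by
  simp only [contr, Phi]
  have expand : ∀ C : Idx, ∑ i : Fin (p+2),
      ((if (Fin.cons C A : Fin 2 → Idx) 0 = (Fin.snoc B C : Fin (p+2) → Idx) i then (1:ℂ) else 0)
          * θ (fun _ => (Fin.cons C A : Fin 2 → Idx) 1)
            ((Fin.snoc B C : Fin (p+2) → Idx) ∘ i.succAbove)
        - (if (Fin.cons C A : Fin 2 → Idx) 1 = (Fin.snoc B C : Fin (p+2) → Idx) i then (1:ℂ) else 0)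
          * θ (fun _ => (Fin.cons C A : Fin 2 → Idx) 0)
            ((Fin.snoc B C : Fin (p+2) → Idx) ∘ i.succAbove))
      = ((∑ i : Fin (p+1),
          ((if C = B i then (1:ℂ) else 0) * θ (fun _ => A 0) (Fin.snoc (B ∘ i.succAbove) C)
            - (if A 0 = B i then (1:ℂ) else 0) * θ (fun _ => C) (Fin.snoc (B ∘ i.succAbove) C)))
          + (θ (fun _ => A 0) B - (if A 0 = C then (1:ℂ) else 0) * θ (fun _ => C) B)) := by
    intro C
    rw [Fin.sum_univ_castSucc]
    congr 1
    · refine Finset.sum_congr rfl (fun i _ => ?_)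
      rw [Fin.snoc_castSucc, snoc_comp_succAbove_castSucc, Fin.cons_zero,
        show (Fin.cons C A : Fin 2 → Idx) 1 = A 0 from rfl]
    · rw [Fin.snoc_last, snoc_comp_succAbove_last, Fin.cons_zero,
        show (Fin.cons C A : Fin 2 → Idx) 1 = A 0 from rfl]
      simp
  simp only [expand]
  rw [Finset.sum_add_distrib, Finset.sum_sub_distrib]
  have part1 : ∑ C : Idx, ∑ i : Fin (p+1),
      ((if C = B i then (1:ℂ) else 0) * θ (fun _ => A 0) (Fin.snoc (B ∘ i.succAbove) C)
        - (if A 0 = B i then (1:ℂ) else 0) * θ (fun _ => C) (Fin.snoc (B ∘ i.succAbove) C))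
      = ((p+1 : ℕ) : ℂ) * θ (fun _ => A 0) B := by
    rw [Finset.sum_comm]
    have inner : ∀ i : Fin (p+1), ∑ C : Idx,
        ((if C = B i then (1:ℂ) else 0) * θ (fun _ => A 0) (Fin.snoc (B ∘ i.succAbove) C)
          - (if A 0 = B i then (1:ℂ) else 0) * θ (fun _ => C) (Fin.snoc (B ∘ i.succAbove) C))
        = θ (fun _ => A 0) B := by
      intro i
      rw [Finset.sum_sub_distrib]
      have t1 : ∑ C : Idx, (if C = B i then (1:ℂ) else 0)
            * θ (fun _ => A 0) (Fin.snoc (B ∘ i.succAbove) C)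
          = θ (fun _ => A 0) B := by
        rw [Finset.sum_eq_single (B i)]
        · rw [if_pos rfl, one_mul, snoc_self_comp B i,
            hsθ (fun _ => A 0) ((finRotate (p+1)).trans (i.cycleRange.symm)) B]
        · intro C _ hC
          rw [if_neg hC, zero_mul]
        · intro hmem
          exact absurd (Finset.mem_univ _) hmem
      have t2 : ∑ C : Idx, (if A 0 = B i then (1:ℂ) else 0)
            * θ (fun _ => C) (Fin.snoc (B ∘ i.succAbove) C) = 0 := by
        rw [← Finset.mul_sum, hcθ (B ∘ i.succAbove), mul_zero]
      rw [t1, t2, sub_zero]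
    simp only [inner]
    rw [Finset.sum_const, Finset.card_univ, Fintype.card_fin, nsmul_eq_mul]
  have t1 : ∑ _C : Idx, θ (fun _ => A 0) B = ((4:ℕ) : ℂ) * θ (fun _ => A 0) B := by
    rw [Finset.sum_const, Finset.card_univ, Fintype.card_fin, nsmul_eq_mul]
    try norm_num
  have t2 : ∑ C : Idx, (if A 0 = C then (1:ℂ) else 0) * θ (fun _ => C) B
      = θ (fun _ => A 0) B := by
    rw [Finset.sum_eq_single (A 0)]
    · rw [if_pos rfl, one_mul]
    · intro C _ hC
      rw [if_neg (fun hcc => hC hcc.symm), zero_mul]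
    · intro hmem
      exact absurd (Finset.mem_univ _) hmem
  rw [part1, t1, t2, ← one_tuple_eq A]
  push_cast
  ring

lemma contr_Psi (v : Pt) {p : ℕ} (θ : Tens 1 (p+1)) (κ : Tens 0 (p+2)) (hsκ : SymSub κ)
    (hκθ : ∀ (a : Idx) (T : Fin (p+1) → Idx),
      ∑ D : Idx, symbM v D a * κ Fin.elim0 (Fin.cons D T) = θ (fun _ => a) T)
    (A : Fin 1 → Idx) (B : Fin (p+1) → Idx) :
    contr (Psi v κ) A B = θ A B := by
  simp only [contr, Psi]
  have h1 : ∀ C : Idx, κ Fin.elim0 (Fin.snoc B C) = κ Fin.elim0 (Fin.cons C B) := by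
    intro C
    rw [snoc_eq_cons_comp B C, hsκ Fin.elim0 (finRotate (p+1+1)) (Fin.cons C B)]
  have h2 : ∀ C : Idx, (Fin.cons C A : Fin 2 → Idx) 0 = C := fun C => rfl
  have h3 : ∀ C : Idx, (Fin.cons C A : Fin 2 → Idx) 1 = A 0 := fun C => rfl
  simp only [h1, h2, h3]
  rw [hκθ (A 0) B, ← one_tuple_eq A]
/-! ### The correction cancellation -/

lemma corr {p : ℕ} {v : Pt} (θ : Tens 1 (p+1)) (κ : Tens 0 (p+2))
    (hS : ∀ (a b : Idx) (T : Fin p → Idx),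
      ∑ D : Idx, symbM v D a * θ (fun _ => b) (Fin.cons D T)
        = ∑ D : Idx, symbM v D b * θ (fun _ => a) (Fin.cons D T))
    (hκθ : ∀ (a : Idx) (T : Fin (p+1) → Idx),
      ∑ D : Idx, symbM v D a * κ Fin.elim0 (Fin.cons D T) = θ (fun _ => a) T)
    (A : Fin 3 → Idx) (B : Fin (p+1) → Idx) :
    Dop v (Phi θ) A B + 2 * Dop v (Psi v κ) A B = 0 := by
  have hPhiCons : ∀ (A₂ : Fin 2 → Idx) (D : Idx), Phi θ A₂ (Fin.cons D B)
      = ((if A₂ 0 = D then (1:ℂ) else 0) * θ (fun _ => A₂ 1) B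
          - (if A₂ 1 = D then (1:ℂ) else 0) * θ (fun _ => A₂ 0) B)
        + ∑ i : Fin (p+1),
            ((if A₂ 0 = B i then (1:ℂ) else 0) * θ (fun _ => A₂ 1) (Fin.cons D (B ∘ i.succAbove))
              - (if A₂ 1 = B i then (1:ℂ) else 0)
                  * θ (fun _ => A₂ 0) (Fin.cons D (B ∘ i.succAbove))) := by
    intro A₂ D
    simp only [Phi]
    rw [Fin.sum_univ_succ]
    simp only [Fin.cons_zero, Fin.cons_succ, cons_comp_succAbove_zero, cons_comp_succAbove_succ]
  have hMite : ∀ (a x : Idx) (w : ℂ),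
      ∑ D : Idx, symbM v D a * ((if x = D then (1:ℂ) else 0) * w) = symbM v x a * w := by
    intro a x w
    rw [Finset.sum_eq_single x]
    · rw [if_pos rfl, one_mul]
    · intro D _ hD
      rw [if_neg (fun h => hD h.symm), zero_mul, mul_zero]
    · intro hmem
      exact absurd (Finset.mem_univ _) hmem
  have hMPhi : ∀ (A₂ : Fin 2 → Idx) (a : Idx),
      ∑ D : Idx, symbM v D a * Phi θ A₂ (Fin.cons D B)
      = (symbM v (A₂ 0) a * θ (fun _ => A₂ 1) B - symbM v (A₂ 1) a * θ (fun _ => A₂ 0) B)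
        + ∑ i : Fin (p+1),
            ((if A₂ 0 = B i then (1:ℂ) else 0)
                * ∑ D : Idx, symbM v D a * θ (fun _ => A₂ 1) (Fin.cons D (B ∘ i.succAbove))
              - (if A₂ 1 = B i then (1:ℂ) else 0)
                * ∑ D : Idx, symbM v D a * θ (fun _ => A₂ 0) (Fin.cons D (B ∘ i.succAbove))) := by
    intro A₂ a
    simp only [hPhiCons, mul_add, mul_sub]
    rw [Finset.sum_add_distrib]
    congr 1
    · rw [Finset.sum_sub_distrib, hMite a (A₂ 0) (θ (fun _ => A₂ 1) B),
        hMite a (A₂ 1) (θ (fun _ => A₂ 0) B)]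
    · calc ∑ D : Idx, symbM v D a * ∑ i : Fin (p+1),
            ((if A₂ 0 = B i then (1:ℂ) else 0) * θ (fun _ => A₂ 1) (Fin.cons D (B ∘ i.succAbove))
              - (if A₂ 1 = B i then (1:ℂ) else 0)
                  * θ (fun _ => A₂ 0) (Fin.cons D (B ∘ i.succAbove)))
          = ∑ D : Idx, ∑ i : Fin (p+1), symbM v D a *
              ((if A₂ 0 = B i then (1:ℂ) else 0) * θ (fun _ => A₂ 1) (Fin.cons D (B ∘ i.succAbove))
                - (if A₂ 1 = B i then (1:ℂ) else 0)
                    * θ (fun _ => A₂ 0) (Fin.cons D (B ∘ i.succAbove))) := by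
            refine Finset.sum_congr rfl (fun D _ => ?_)
            rw [Finset.mul_sum]
        _ = ∑ i : Fin (p+1), ∑ D : Idx, symbM v D a *
              ((if A₂ 0 = B i then (1:ℂ) else 0) * θ (fun _ => A₂ 1) (Fin.cons D (B ∘ i.succAbove))
                - (if A₂ 1 = B i then (1:ℂ) else 0)
                    * θ (fun _ => A₂ 0) (Fin.cons D (B ∘ i.succAbove))) := Finset.sum_comm
        _ = _ := by
            refine Finset.sum_congr rfl (fun i _ => ?_)
            rw [Finset.mul_sum, Finset.mul_sum, ← Finset.sum_sub_distrib]
            refine Finset.sum_congr rfl (fun D _ => ?_)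
            ring
  have hMPsi : ∀ (A₂ : Fin 2 → Idx) (a : Idx),
      ∑ D : Idx, symbM v D a * Psi v κ A₂ (Fin.cons D B)
      = symbM v (A₂ 0) (A₂ 1) * θ (fun _ => a) B := by
    intro A₂ a
    simp only [Psi]
    rw [← hκθ a B, Finset.mul_sum]
    refine Finset.sum_congr rfl (fun D _ => ?_)
    ring
  have hval : ∀ (u : Fin 3) (w : Fin 2) (x : Fin 3), (u.succAbove w = x) →
      (A ∘ u.succAbove) w = A x := by
    intro u w x hx
    rw [Function.comp_apply, hx]
  rw [Dop, Dop, Fin.sum_univ_three, Fin.sum_univ_three]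
  simp only [hMPhi, hMPsi]
  rw [hval 0 0 1 (by decide), hval 0 1 2 (by decide), hval 1 0 0 (by decide),
    hval 1 1 2 (by decide), hval 2 0 0 (by decide), hval 2 1 1 (by decide)]
  simp only [show ((0:Fin 3):ℕ) = 0 from rfl, show ((1:Fin 3):ℕ) = 1 from rfl,
    show ((2:Fin 3):ℕ) = 2 from rfl]
  have hzero : (∑ i : Fin (p+1),
        ((if A 1 = B i then (1:ℂ) else 0)
            * ∑ D : Idx, symbM v D (A 0) * θ (fun _ => A 2) (Fin.cons D (B ∘ i.succAbove))
          - (if A 2 = B i then (1:ℂ) else 0)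
            * ∑ D : Idx, symbM v D (A 0) * θ (fun _ => A 1) (Fin.cons D (B ∘ i.succAbove))))
      - (∑ i : Fin (p+1),
        ((if A 0 = B i then (1:ℂ) else 0)
            * ∑ D : Idx, symbM v D (A 1) * θ (fun _ => A 2) (Fin.cons D (B ∘ i.succAbove))
          - (if A 2 = B i then (1:ℂ) else 0)
            * ∑ D : Idx, symbM v D (A 1) * θ (fun _ => A 0) (Fin.cons D (B ∘ i.succAbove))))
      + (∑ i : Fin (p+1),
        ((if A 0 = B i then (1:ℂ) else 0)
            * ∑ D : Idx, symbM v D (A 2) * θ (fun _ => A 1) (Fin.cons D (B ∘ i.succAbove))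
          - (if A 1 = B i then (1:ℂ) else 0)
            * ∑ D : Idx, symbM v D (A 2) * θ (fun _ => A 0) (Fin.cons D (B ∘ i.succAbove))))
      = 0 := by
    rw [← Finset.sum_sub_distrib, ← Finset.sum_add_distrib]
    refine Finset.sum_eq_zero (fun i _ => ?_)
    linear_combination (if A 1 = B i then (1:ℂ) else 0) * hS (A 0) (A 2) (B ∘ i.succAbove)
      - (if A 2 = B i then (1:ℂ) else 0) * hS (A 0) (A 1) (B ∘ i.succAbove)
      + (if A 0 = B i then (1:ℂ) else 0) * hS (A 2) (A 1) (B ∘ i.succAbove)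
  linear_combination hzero + θ (fun _ => A 2) B * symbM_antisymm v (A 0) (A 1)
    - θ (fun _ => A 1) B * symbM_antisymm v (A 0) (A 2)
    + θ (fun _ => A 0) B * symbM_antisymm v (A 1) (A 2)
/-! ### Linearity helpers -/

lemma Dop_smul {q p : ℕ} (v : Pt) (c : ℂ) (f : Tens q (p+1)) (A : Fin (q+1) → Idx)
    (B : Fin p → Idx) :
    Dop v (fun a b => c * f a b) A B = c * Dop v f A B := by
  rw [Dop, Dop, Finset.mul_sum]
  refine Finset.sum_congr rfl (fun j _ => ?_)
  rw [Finset.mul_sum, Finset.mul_sum, Finset.mul_sum]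
  refine Finset.sum_congr rfl (fun D _ => ?_)
  ring

lemma contr_smul {q p : ℕ} (c : ℂ) (f : Tens (q+1) (p+1)) (A : Fin q → Idx)
    (B : Fin p → Idx) :
    contr (fun a b => c * f a b) A B = c * contr f A B := by
  simp only [contr, Finset.mul_sum]

lemma Dop_comb {q p : ℕ} (v : Pt) (c1 c2 c3 : ℂ) (f g h : Tens q (p+1))
    (A : Fin (q+1) → Idx) (B : Fin p → Idx) :
    Dop v (fun a b => c1 * f a b + c2 * g a b + c3 * h a b) A B
      = c1 * Dop v f A B + c2 * Dop v g A B + c3 * Dop v h A B := by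
  have inner : ∀ j : Fin (q+1), ∑ D : Idx, symbM v D (A j) *
      (c1 * f (A ∘ j.succAbove) (Fin.cons D B) + c2 * g (A ∘ j.succAbove) (Fin.cons D B)
        + c3 * h (A ∘ j.succAbove) (Fin.cons D B))
      = c1 * (∑ D : Idx, symbM v D (A j) * f (A ∘ j.succAbove) (Fin.cons D B))
        + c2 * (∑ D : Idx, symbM v D (A j) * g (A ∘ j.succAbove) (Fin.cons D B))
        + c3 * (∑ D : Idx, symbM v D (A j) * h (A ∘ j.succAbove) (Fin.cons D B)) := by
    intro j
    rw [Finset.mul_sum, Finset.mul_sum, Finset.mul_sum, ← Finset.sum_add_distrib,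
      ← Finset.sum_add_distrib]
    refine Finset.sum_congr rfl (fun D _ => ?_)
    ring
  rw [Dop, Dop, Dop, Dop]
  simp only [inner]
  rw [Finset.mul_sum, Finset.mul_sum, Finset.mul_sum, ← Finset.sum_add_distrib,
    ← Finset.sum_add_distrib]
  refine Finset.sum_congr rfl (fun j _ => ?_)
  ring

lemma contr_comb {q p : ℕ} (c1 c2 c3 : ℂ) (f g h : Tens (q+1) (p+1))
    (A : Fin q → Idx) (B : Fin p → Idx) :
    contr (fun a b => c1 * f a b + c2 * g a b + c3 * h a b) A B
      = c1 * contr f A B + c2 * contr g A B + c3 * contr h A B := by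
  simp only [contr, Finset.mul_sum, ← Finset.sum_add_distrib]

/-- nonvanishing of positive natural casts -/
lemma natC_ne {n : ℕ} : ((n+1 : ℕ) : ℂ) ≠ 0 :=
  Nat.cast_ne_zero.mpr (Nat.succ_ne_zero n)

lemma Dop_zero_level {p : ℕ} (v : Pt) (f : Tens 0 (p+1)) (a : Idx) (T : Fin p → Idx) :
    Dop v f (fun _ => a) T = ∑ D : Idx, symbM v D a * f Fin.elim0 (Fin.cons D T) := by
  rw [Dop, Fin.sum_univ_succ, Fin.sum_univ_zero, add_zero]
  simp only [Fin.val_zero, pow_zero, one_mul]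
  refine Finset.sum_congr rfl (fun D _ => ?_)
  have he : ((fun _ : Fin 1 => a) ∘ (0 : Fin 1).succAbove) = (Fin.elim0 : Fin 0 → Idx) := by
    funext x
    exact x.elim0
  rw [he]

/-- For `k = m + 4 ≥ 4` and every `v ∈ ℝ⁶ \ {0}`, the symbol sequence
`0 → 𝒱₀ →σ₀ 𝒱₁ →σ₁ 𝒱₂ →σ₂ 𝒱₃ → 0` is exact; i.e. the `k`-monogenic complex is an
elliptic complex. -/
theorem symbol_sequence_exact (k m : ℕ) (hk : k = m + 4) (v : Pt) (hv : v ≠ 0) :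
    -- σ₀ is injective
    (∀ ξ : Tens 0 (m+4), InV0 ξ → (∀ A B, symb v ξ A B = 0) → ∀ A B, ξ A B = 0) ∧
    -- im σ₀ ⊆ ker σ₁
    (∀ Ξ : Tens 0 (m+4), InV0 Ξ → ∀ A B, symb v (symb v Ξ) A B = 0) ∧
    -- ker σ₁ ⊆ im σ₀
    (∀ ξ : Tens 1 (m+3), InV ξ → (∀ A B, symb v ξ A B = 0) →
      ∃ Ξ : Tens 0 (m+4), InV0 Ξ ∧ ∀ A B, symb v Ξ A B = ξ A B) ∧
    -- im σ₁ ⊆ ker σ₂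
    (∀ Ξ : Tens 1 (m+3), InV Ξ → ∀ A B, symb v (symb v Ξ) A B = 0) ∧
    -- ker σ₂ ⊆ im σ₁
    (∀ ξ : Tens 2 (m+2), InV ξ → (∀ A B, symb v ξ A B = 0) →
      ∃ Ξ : Tens 1 (m+3), InV Ξ ∧ ∀ A B, symb v Ξ A B = ξ A B) ∧
    -- σ₂ is surjective
    (∀ ξ : Tens 3 (m+1), InV ξ →
      ∃ Ξ : Tens 2 (m+2), InV Ξ ∧ ∀ A B, symb v Ξ A B = ξ A B) := by
  refine ⟨?_, ?_, ?_, ?_, ?_, ?_⟩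
  -- Part 1 : injectivity of σ₀
  · intro ξ _ hker A B
    have hD : ∀ (A' : Fin 1 → Idx) (B' : Fin (m+3) → Idx), Dop v ξ A' B' = 0 := by
      intro A' B'
      have h := symb_eq_Dop v ξ (antiSup_zero ξ) A' B'
      rw [hker A' B'] at h
      rcases mul_eq_zero.mp h.symm with h3 | h3
      · exact absurd h3 (inv_ne_zero natC_ne)
      · exact h3
    exact Dop_inj hv ξ hD A B
  -- Part 2 : σ₁ ∘ σ₀ = 0
  · rintro Ξ ⟨_, hs⟩ A B
    have hpt : ∀ (a : Fin 1 → Idx) (b : Fin (m+3) → Idx),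
        symb v Ξ a b = ((0+1:ℕ):ℂ)⁻¹ * Dop v Ξ a b :=
      fun a b => symb_eq_Dop v Ξ (antiSup_zero Ξ) a b
    rw [symb_eq_Dop v (symb v Ξ) (symb_antiSup v Ξ) A B]
    have hDD : Dop v (symb v Ξ) A B = ((0+1:ℕ):ℂ)⁻¹ * Dop v (Dop v Ξ) A B := by
      rw [Dop, Dop, Finset.mul_sum]
      refine Finset.sum_congr rfl (fun j _ => ?_)
      simp only [hpt]
      conv_lhs => rw [Finset.mul_sum]
      conv_rhs => rw [Finset.mul_sum, Finset.mul_sum]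
      refine Finset.sum_congr rfl (fun D _ => ?_)
      ring
    rw [hDD, DopDop0 Ξ hs A B, mul_zero, mul_zero]
  -- Part 3 : ker σ₁ ⊆ im σ₀
  · rintro ξ ⟨⟨ha, hs⟩, htf⟩ hker
    have hD0 : ∀ (A' : Fin 2 → Idx) (B' : Fin (m+2) → Idx), Dop v ξ A' B' = 0 := by
      intro A' B'
      have h := symb_eq_Dop v ξ ha A' B'
      rw [hker A' B'] at h
      rcases mul_eq_zero.mp h.symm with h3 | h3
      · exact absurd h3 (inv_ne_zero natC_ne)
      · exact h3
    refine ⟨fun A B => -((((m+2+1)+(0+1) : ℕ)) : ℂ)⁻¹ * Hop v ξ A B,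
      ⟨antiSup_zero _, ?_⟩, ?_⟩
    · intro A π B
      simp only [Hop_symSub v ξ hs A π B]
    · intro A B
      rw [symb_eq_Dop v _ (antiSup_zero _) A B,
        Dop_smul v (-((((m+2+1)+(0+1) : ℕ)) : ℂ)⁻¹) (Hop v ξ) A B]
      have hhom := homotopy hv ξ ha hs A B
      have hzero : Hop v (Dop v ξ) A B = 0 := by
        rw [Hop]
        exact Finset.sum_eq_zero (fun i _ => Finset.sum_eq_zero (fun E _ => by
          rw [hD0, mul_zero]))
      rw [hzero, zero_add] at hhom
      rw [hhom]
      have hne : ((((m+2+1)+(0+1) : ℕ)) : ℂ) ≠ 0 := natC_ne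
      rw [show ((0+1:ℕ):ℂ) = 1 from by norm_num, inv_one, one_mul,
        show -((((m+2+1)+(0+1) : ℕ)) : ℂ)⁻¹ * (-((((m+2+1)+(0+1) : ℕ)) : ℂ) * ξ A B)
          = ((((m+2+1)+(0+1) : ℕ)) : ℂ)⁻¹ * (((((m+2+1)+(0+1) : ℕ)) : ℂ) * ξ A B) from by
            ring,
        inv_mul_cancel_left₀ hne]
  -- Part 4 : σ₂ ∘ σ₁ = 0
  · rintro Ξ ⟨⟨ha, hs⟩, _⟩ A B
    have hpt : ∀ (a : Fin 2 → Idx) (b : Fin (m+2) → Idx),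
        symb v Ξ a b = ((1+1:ℕ):ℂ)⁻¹ * Dop v Ξ a b :=
      fun a b => symb_eq_Dop v Ξ ha a b
    rw [symb_eq_Dop v (symb v Ξ) (symb_antiSup v Ξ) A B]
    have hDD : Dop v (symb v Ξ) A B = ((1+1:ℕ):ℂ)⁻¹ * Dop v (Dop v Ξ) A B := by
      rw [Dop, Dop, Finset.mul_sum]
      refine Finset.sum_congr rfl (fun j _ => ?_)
      simp only [hpt]
      conv_lhs => rw [Finset.mul_sum]
      conv_rhs => rw [Finset.mul_sum, Finset.mul_sum]
      refine Finset.sum_congr rfl (fun D _ => ?_)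
      ring
    rw [hDD, DopDop1 Ξ hs A B, mul_zero, mul_zero]
  -- Part 5 : ker σ₂ ⊆ im σ₁
  · rintro ξ ⟨⟨ha, hs⟩, htf⟩ hker
    have hD0 : ∀ (A' : Fin 3 → Idx) (B' : Fin (m+1) → Idx), Dop v ξ A' B' = 0 := by
      intro A' B'
      have h := symb_eq_Dop v ξ ha A' B'
      rw [hker A' B'] at h
      rcases mul_eq_zero.mp h.symm with h3 | h3
      · exact absurd h3 (inv_ne_zero natC_ne)
      · exact h3
    have hc4ne : ((((m+1+1)+(1+1) : ℕ)) : ℂ) ≠ 0 := natC_ne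
    have hDH : ∀ (a : Fin 2 → Idx) (b : Fin (m+2) → Idx),
        Dop v (Hop v ξ) a b = -((((m+1+1)+(1+1) : ℕ)) : ℂ) * ξ a b := by
      intro a b
      have hhom := homotopy hv ξ ha hs a b
      have hzero : Hop v (Dop v ξ) a b = 0 := by
        rw [Hop]
        exact Finset.sum_eq_zero (fun i _ => Finset.sum_eq_zero (fun E _ => by
          rw [hD0, mul_zero]))
      rw [hzero, zero_add] at hhom
      exact hhom
    have hθ0 : ∀ (a : Fin 0 → Idx) (b : Fin (m+2) → Idx), contr (Hop v ξ) a b = 0 := by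
      apply Dop_inj hv
      intro A' B'
      have h := contr_Dop v (Hop v ξ) (Hop_symSub v ξ hs) A' B'
      have h2 : contr (Dop v (Hop v ξ)) A' B' = 0 := by
        simp only [contr, hDH]
        rw [← Finset.mul_sum]
        have h3 := htf A' B'
        simp only [contr] at h3
        rw [h3, mul_zero]
      rw [h2] at h
      exact neg_eq_zero.mp h.symm
    refine ⟨fun A B => (-(2:ℂ) * ((((m+1+1)+(1+1) : ℕ)) : ℂ)⁻¹) * Hop v ξ A B,
      ⟨⟨antiSup_one _, ?_⟩, ?_⟩, ?_⟩
    · intro A π B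
      simp only [Hop_symSub v ξ hs A π B]
    · intro A B
      rw [contr_smul (-(2:ℂ) * ((((m+1+1)+(1+1) : ℕ)) : ℂ)⁻¹) (Hop v ξ) A B,
        hθ0 A B, mul_zero]
    · intro A B
      rw [symb_eq_Dop v _ (antiSup_one _) A B,
        Dop_smul v (-(2:ℂ) * ((((m+1+1)+(1+1) : ℕ)) : ℂ)⁻¹) (Hop v ξ) A B, hDH A B]
      rw [show (-(2:ℂ) * ((((m+1+1)+(1+1) : ℕ)) : ℂ)⁻¹)
            * (-((((m+1+1)+(1+1) : ℕ)) : ℂ) * ξ A B)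
          = (2:ℂ) * (((((m+1+1)+(1+1) : ℕ)) : ℂ)⁻¹
            * (((((m+1+1)+(1+1) : ℕ)) : ℂ) * ξ A B)) from by ring,
        inv_mul_cancel_left₀ hc4ne,
        show ((1+1:ℕ):ℂ) = 2 from by norm_num, ← mul_assoc,
        inv_mul_cancel₀ (by norm_num : (2:ℂ) ≠ 0), one_mul]
  -- Part 6 : surjectivity of σ₂
  · rintro ξ ⟨⟨ha, hs⟩, htf⟩
    have hD0 : ∀ (A' : Fin 4 → Idx) (B' : Fin m → Idx), Dop v ξ A' B' = 0 :=
      fun A' B' => Dop_V3 ξ ha hs htf A' B'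
    have hc4ne : ((((m+1)+(2+1) : ℕ)) : ℂ) ≠ 0 := natC_ne
    have hηs : SymSub (Hop v ξ) := Hop_symSub v ξ hs
    have hηa : AntiSup (Hop v ξ) := Hop_antiSup v ξ ha
    have hDH : ∀ (a : Fin 3 → Idx) (b : Fin (m+1) → Idx),
        Dop v (Hop v ξ) a b = -((((m+1)+(2+1) : ℕ)) : ℂ) * ξ a b := by
      intro a b
      have hhom := homotopy hv ξ ha hs a b
      have hzero : Hop v (Dop v ξ) a b = 0 := by
        rw [Hop]
        exact Finset.sum_eq_zero (fun i _ => Finset.sum_eq_zero (fun E _ => by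
          rw [hD0, mul_zero]))
      rw [hzero, zero_add] at hhom
      exact hhom
    have hθs : SymSub (contr (Hop v ξ)) := contr_symSub (Hop v ξ) hηs
    have hθa : AntiSup (contr (Hop v ξ)) := antiSup_one _
    have hDθ : ∀ (A' : Fin 2 → Idx) (B' : Fin m → Idx),
        Dop v (contr (Hop v ξ)) A' B' = 0 := by
      intro A' B'
      have h := contr_Dop v (Hop v ξ) hηs A' B'
      have h2 : contr (Dop v (Hop v ξ)) A' B' = 0 := by
        simp only [contr, hDH]
        rw [← Finset.mul_sum]
        have h3 := htf A' B'
        simp only [contr] at h3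
        rw [h3, mul_zero]
      rw [h2] at h
      exact neg_eq_zero.mp h.symm
    have hcθ : ∀ T : Fin m → Idx,
        ∑ C : Idx, contr (Hop v ξ) (fun _ => C) (Fin.snoc T C) = 0 := by
      intro T
      calc ∑ C : Idx, contr (Hop v ξ) (fun _ => C) (Fin.snoc T C)
          = ∑ C : Idx, contr (Hop v ξ) (Fin.cons C Fin.elim0) (Fin.snoc T C) := by
            refine Finset.sum_congr rfl (fun C _ => ?_)
            rw [cons_empty C Fin.elim0]
        _ = contr (contr (Hop v ξ)) Fin.elim0 T := rfl
        _ = 0 := contr_contr (Hop v ξ) hηa hηs Fin.elim0 T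
    have hS : ∀ (a b : Idx) (T : Fin m → Idx),
        ∑ D : Idx, symbM v D a * contr (Hop v ξ) (fun _ => b) (Fin.cons D T)
          = ∑ D : Idx, symbM v D b * contr (Hop v ξ) (fun _ => a) (Fin.cons D T) := by
      intro a b T
      have h := hDθ ![a, b] T
      rw [Dop, Fin.sum_univ_two] at h
      have ht0 : ((![a, b] : Fin 2 → Idx) ∘ (0:Fin 2).succAbove) = fun _ : Fin 1 => b := by
        funext t
        have : t = 0 := Subsingleton.elim t 0
        subst this
        show (![a, b] : Fin 2 → Idx) ((0:Fin 2).succAbove 0) = b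
        rw [show (0:Fin 2).succAbove 0 = 1 from by decide]
        rfl
      have ht1 : ((![a, b] : Fin 2 → Idx) ∘ (1:Fin 2).succAbove) = fun _ : Fin 1 => a := by
        funext t
        have : t = 0 := Subsingleton.elim t 0
        subst this
        show (![a, b] : Fin 2 → Idx) ((1:Fin 2).succAbove 0) = a
        rw [show (1:Fin 2).succAbove 0 = 0 from by decide]
        rfl
      rw [ht0, ht1, show (![a, b] : Fin 2 → Idx) 0 = a from rfl,
        show (![a, b] : Fin 2 → Idx) 1 = b from rfl] at h
      simp only [Fin.val_zero, Fin.val_one, pow_zero, pow_one, one_mul, neg_one_mul] at h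
      linear_combination h
    -- κ
    have hκs : SymSub (fun (e : Fin 0 → Idx) (b : Fin (m+2) → Idx) =>
        -((((m)+1+(0+1) : ℕ)) : ℂ)⁻¹ * Hop v (contr (Hop v ξ)) e b) := by
      intro A' π B'
      simp only [Hop_symSub v (contr (Hop v ξ)) hθs A' π B']
    have hDHθ : ∀ (a' : Fin 1 → Idx) (b' : Fin (m+1) → Idx),
        Dop v (Hop v (contr (Hop v ξ))) a' b'
          = -((((m)+1+(0+1) : ℕ)) : ℂ) * contr (Hop v ξ) a' b' := by
      intro a' b'
      have hhom := homotopy hv (contr (Hop v ξ)) hθa hθs a' b'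
      have hzero : Hop v (Dop v (contr (Hop v ξ))) a' b' = 0 := by
        rw [Hop]
        exact Finset.sum_eq_zero (fun i _ => Finset.sum_eq_zero (fun E _ => by
          rw [hDθ, mul_zero]))
      rw [hzero, zero_add] at hhom
      exact hhom
    have hmκne : ((((m)+1+(0+1) : ℕ)) : ℂ) ≠ 0 := natC_ne
    have hκθ : ∀ (a : Idx) (T : Fin (m+1) → Idx),
        ∑ D : Idx, symbM v D a * (-((((m)+1+(0+1) : ℕ)) : ℂ)⁻¹
            * Hop v (contr (Hop v ξ)) Fin.elim0 (Fin.cons D T))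
          = contr (Hop v ξ) (fun _ => a) T := by
      intro a T
      have hD1 := Dop_zero_level v (Hop v (contr (Hop v ξ))) a T
      have h2 := hDHθ (fun _ : Fin 1 => a) T
      rw [hD1] at h2
      calc ∑ D : Idx, symbM v D a * (-((((m)+1+(0+1) : ℕ)) : ℂ)⁻¹
            * Hop v (contr (Hop v ξ)) Fin.elim0 (Fin.cons D T))
          = -((((m)+1+(0+1) : ℕ)) : ℂ)⁻¹ * ∑ D : Idx, symbM v D a
              * Hop v (contr (Hop v ξ)) Fin.elim0 (Fin.cons D T) := by
            rw [Finset.mul_sum]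
            refine Finset.sum_congr rfl (fun D _ => ?_)
            ring
        _ = contr (Hop v ξ) (fun _ => a) T := by
            rw [h2, show -((((m)+1+(0+1) : ℕ)) : ℂ)⁻¹ * (-((((m)+1+(0+1) : ℕ)) : ℂ)
                  * contr (Hop v ξ) (fun _ => a) T)
                = ((((m)+1+(0+1) : ℕ)) : ℂ)⁻¹ * (((((m)+1+(0+1) : ℕ)) : ℂ)
                  * contr (Hop v ξ) (fun _ => a) T) from by ring,
              inv_mul_cancel_left₀ hmκne]
    -- the witness
    have hmc6 : ((m+6 : ℕ) : ℂ) ≠ 0 := by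
      rw [show (m+6 : ℕ) = (m+5)+1 from rfl]
      exact natC_ne
    refine ⟨fun A B =>
        (-(3:ℂ) * ((((m+1)+(2+1) : ℕ)) : ℂ)⁻¹) * Hop v ξ A B
        + ((3:ℂ) * (((((m+1)+(2+1) : ℕ)) : ℂ)⁻¹ * ((m+6 : ℕ) : ℂ)⁻¹))
            * Phi (contr (Hop v ξ)) A B
        + ((6:ℂ) * (((((m+1)+(2+1) : ℕ)) : ℂ)⁻¹ * ((m+6 : ℕ) : ℂ)⁻¹))
            * Psi v (fun (e : Fin 0 → Idx) (b : Fin (m+2) → Idx) =>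
                -((((m)+1+(0+1) : ℕ)) : ℂ)⁻¹ * Hop v (contr (Hop v ξ)) e b) A B,
      ⟨⟨?_, ?_⟩, ?_⟩, ?_⟩
    · -- AntiSup
      intro π A B
      simp only [hηa π A B, Phi_antiSup (contr (Hop v ξ)) π A B,
        Psi_antiSup v _ π A B]
      ring
    · -- SymSub
      intro A π B
      simp only [hηs A π B, Phi_symSub (contr (Hop v ξ)) hθs A π B,
        Psi_symSub v _ hκs A π B]
    · -- trace free
      intro A B
      rw [contr_comb]
      rw [show contr (Hop v ξ) A B = contr (Hop v ξ) A B from rfl,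
        contr_Phi (contr (Hop v ξ)) hθs hcθ A B,
        contr_Psi v (contr (Hop v ξ)) _ hκs hκθ A B]
      have h2 : ((m+6:ℕ):ℂ)⁻¹ * (((m+4:ℕ):ℂ) + 2) = 1 := by
        rw [show (((m+4:ℕ):ℂ) + 2) = ((m+6:ℕ):ℂ) from by push_cast; ring]
        exact inv_mul_cancel₀ hmc6
      linear_combination (3 * (((((m+1)+(2+1) : ℕ)) : ℂ)⁻¹)
        * contr (Hop v ξ) A B) * h2
    · -- symb = ξ
      intro A B
      rw [symb_eq_Dop v _ ?_ A B, Dop_comb, hDH A B]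
      · have hcr := corr (contr (Hop v ξ))
          (fun (e : Fin 0 → Idx) (b : Fin (m+2) → Idx) =>
            -((((m)+1+(0+1) : ℕ)) : ℂ)⁻¹ * Hop v (contr (Hop v ξ)) e b) hS hκθ A B
        have hgoal : ∀ X Y Z : ℂ, (X + 2*Y = 0) →
            ((2+1:ℕ):ℂ)⁻¹ * ((-(3:ℂ) * ((((m+1)+(2+1) : ℕ)) : ℂ)⁻¹)
                * (-((((m+1)+(2+1) : ℕ)) : ℂ) * Z)
              + ((3:ℂ) * (((((m+1)+(2+1) : ℕ)) : ℂ)⁻¹ * ((m+6 : ℕ) : ℂ)⁻¹)) * X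
              + ((6:ℂ) * (((((m+1)+(2+1) : ℕ)) : ℂ)⁻¹ * ((m+6 : ℕ) : ℂ)⁻¹)) * Y) = Z := by
          intro X Y Z hXY
          have e1 : (-(3:ℂ) * ((((m+1)+(2+1) : ℕ)) : ℂ)⁻¹)
              * (-((((m+1)+(2+1) : ℕ)) : ℂ) * Z) = 3 * Z := by
            rw [show (-(3:ℂ) * ((((m+1)+(2+1) : ℕ)) : ℂ)⁻¹)
                  * (-((((m+1)+(2+1) : ℕ)) : ℂ) * Z)
                = 3 * (((((m+1)+(2+1) : ℕ)) : ℂ)⁻¹ * (((((m+1)+(2+1) : ℕ)) : ℂ) * Z)) from by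
                  ring,
              inv_mul_cancel_left₀ hc4ne]
          calc ((2+1:ℕ):ℂ)⁻¹ * ((-(3:ℂ) * ((((m+1)+(2+1) : ℕ)) : ℂ)⁻¹)
                  * (-((((m+1)+(2+1) : ℕ)) : ℂ) * Z)
                + ((3:ℂ) * (((((m+1)+(2+1) : ℕ)) : ℂ)⁻¹ * ((m+6 : ℕ) : ℂ)⁻¹)) * X
                + ((6:ℂ) * (((((m+1)+(2+1) : ℕ)) : ℂ)⁻¹ * ((m+6 : ℕ) : ℂ)⁻¹)) * Y)
              = ((2+1:ℕ):ℂ)⁻¹ * (3 * Z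
                + ((3:ℂ) * (((((m+1)+(2+1) : ℕ)) : ℂ)⁻¹ * ((m+6 : ℕ) : ℂ)⁻¹)) * (X + 2*Y)) := by
                rw [e1]; ring
            _ = ((2+1:ℕ):ℂ)⁻¹ * (3 * Z) := by rw [hXY, mul_zero, add_zero]
            _ = Z := by
                rw [show ((2+1:ℕ):ℂ) = 3 from by norm_num, inv_mul_cancel_left₀
                  (by norm_num : (3:ℂ) ≠ 0)]
        exact hgoal _ _ _ hcr
      · -- AntiSup of the witness
        intro π A' B'
        simp only [hηa π A' B', Phi_antiSup (contr (Hop v ξ)) π A' B',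
          Psi_antiSup v _ π A' B']
        ring
end
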